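/- arXiv:2605.19084 — 2 statements merged into one kernel-verified Lean document; each statement's English description precedes it below -/
import Mathlib

section
/- Fix m ≥ 2, b ∈ (0,1), and c ∈ ℝ. For each n large enough that a_n := 1/n − b/(n−1) > 0, let P_n be the coordinate-refresh kernel on (ℤ/mℤ)^n with uniform rates α_k = 1/n for all k, and let Q_n be the coordinate-refresh kernel with rates α_1 := 1/n + b and α_k := a_n for 2 ≤ k ≤ n (these rates sum to 1). Then, with continuous-time separation distances, |s^{Q_n}(a_n^{−1}(log(n−1) + c)) − s^{P_n}(n(log n + c))| → 0 as n → ∞; consequently s^{Q_n}(a_n^{−1}(log(n−1) + c)) → 1 − e^{−e^{−c}}. -/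
open Filter Finset

/-- The coordinate-refresh kernel on `(ℤ/mℤ)^n` with rates `α`. -/
noncomputable def coordRefresh (m n : ℕ) [NeZero m] (α : Fin n → ℝ) :
    Matrix (Fin n → ZMod m) (Fin n → ZMod m) ℝ := fun x y =>
  ∑ k : Fin n, α k * (1 / (m : ℝ)) *
    (if ∀ j : Fin n, j ≠ k → y j = x j then 1 else 0)

/-- The continuous-time separation distance of a coordinate-refresh walk on
`(ℤ/mℤ)^n` (whose stationary distribution is uniform, of mass `m^{-n}`). -/
noncomputable def zmSep (m n : ℕ) [NeZero m] (α : Fin n → ℝ) (t : ℝ) : ℝ :=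
  ⨆ x : Fin n → ZMod m, ⨆ y : Fin n → ZMod m,
    (1 - (m : ℝ) ^ n * (NormedSpace.exp (t • (coordRefresh m n α - 1))) x y)

lemma exp_of_idem {A : Type*} [NormedRing A] [NormedAlgebra ℝ A] [CompleteSpace A]
    (s : ℝ) (p : A) (hp : p * p = p) :
    NormedSpace.exp (s • p) = 1 + (Real.exp s - 1) • p := by
  have hpow : ∀ k : ℕ, (s • p) ^ (k + 1) = (s ^ (k + 1)) • p := by
    intro k
    induction k with
    | zero => simp
    | succ k ih =>
      rw [pow_succ, ih, smul_mul_smul_comm, hp]; congr 1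
  have h1 : HasSum (fun k : ℕ => (k.factorial⁻¹ : ℝ) • (s • p) ^ k)
      (NormedSpace.exp (s • p)) := NormedSpace.exp_series_hasSum_exp' _
  have h2 : HasSum (fun k : ℕ => ((k.factorial⁻¹ : ℝ) * s ^ k) • p) ((Real.exp s) • p) := by
    have := (NormedSpace.exp_series_hasSum_exp' (𝕂 := ℝ) s).smul_const p
    simpa [Real.exp_eq_exp_ℝ, smul_smul] using this
  have h3 : Function.update (fun k : ℕ => ((k.factorial⁻¹ : ℝ) * s ^ k) • p) 0 1
      = fun k : ℕ => (k.factorial⁻¹ : ℝ) • (s • p) ^ k := by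
    funext k
    cases k with
    | zero => simp
    | succ k =>
      rw [Function.update_of_ne (Nat.succ_ne_zero k), hpow k, smul_smul]
  have h4 := h2.update 0 (1 : A)
  rw [h3] at h4
  have := h1.unique h4
  rw [this]
  simp [sub_smul, one_smul]
  abel

lemma exp_of_idem_sub_one {A : Type*} [NormedRing A] [NormedAlgebra ℝ A] [CompleteSpace A]
    (s : ℝ) (p : A) (hp : p * p = p) :
    NormedSpace.exp (s • (p - 1)) = Real.exp (-s) • 1 + (1 - Real.exp (-s)) • p := by
  have hsplit : s • (p - 1) = s • p + (-s) • (1 : A) := by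
    rw [smul_sub, sub_eq_add_neg, ← neg_smul]
  have hcomm : Commute (s • p) ((-s) • (1 : A)) :=
    ((Commute.one_right p).smul_left s).smul_right (-s)
  letI : NormedAlgebra ℚ A := NormedAlgebra.restrictScalars ℚ ℝ A
  rw [hsplit, NormedSpace.exp_add_of_commute hcomm, exp_of_idem s p hp,
    exp_of_idem (-s) 1 (one_mul 1)]
  have h1 : (1 : A) + (Real.exp (-s) - 1) • (1 : A) = Real.exp (-s) • 1 := by
    rw [sub_smul, one_smul]; abel
  rw [h1, add_mul, one_mul, smul_mul_assoc, mul_smul_comm, smul_smul, mul_one]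
  congr 1
  have : Real.exp s * Real.exp (-s) = 1 := by
    rw [← Real.exp_add]; simp
  congr 1
  nlinarith [this]

noncomputable def refMat (m n : ℕ) [NeZero m] (k : Fin n) :
    Matrix (Fin n → ZMod m) (Fin n → ZMod m) ℝ := fun x y =>
  (1 / (m : ℝ)) * (if ∀ j : Fin n, j ≠ k → y j = x j then 1 else 0)

lemma sum_indicator (m n : ℕ) [NeZero m] (k : Fin n) (x : Fin n → ZMod m) :
    ∑ z : Fin n → ZMod m, (if ∀ j : Fin n, j ≠ k → z j = x j then (1 : ℝ) else 0) = m := by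
  rw [Finset.sum_boole]
  have himg : Finset.univ.filter (fun z : Fin n → ZMod m => ∀ j : Fin n, j ≠ k → z j = x j)
      = Finset.image (fun a => Function.update x k a) Finset.univ := by
    ext z
    simp only [Finset.mem_filter, Finset.mem_univ, true_and, Finset.mem_image]
    constructor
    · intro hz
      refine ⟨z k, ?_⟩
      funext j
      rcases eq_or_ne j k with rfl | hj
      · rw [Function.update_self]
      · rw [Function.update_of_ne hj, hz j hj]
    · rintro ⟨a, rfl⟩ j hj
      rw [Function.update_of_ne hj]
  rw [himg, Finset.card_image_of_injective _ (Function.update_injective x k),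
    Finset.card_univ, ZMod.card]

lemma refMat_idem (m n : ℕ) [NeZero m] (k : Fin n) :
    refMat m n k * refMat m n k = refMat m n k := by
  have hm : (m : ℝ) ≠ 0 := Nat.cast_ne_zero.2 (NeZero.ne m)
  ext x y
  rw [Matrix.mul_apply]
  have key : ∀ z : Fin n → ZMod m, refMat m n k x z * refMat m n k z y
      = ((1 / (m : ℝ))^2 * (if ∀ j : Fin n, j ≠ k → y j = x j then 1 else 0)) *
        (if ∀ j : Fin n, j ≠ k → z j = x j then (1:ℝ) else 0) := by
    intro z
    simp only [refMat]
    by_cases hz : ∀ j : Fin n, j ≠ k → z j = x j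
    · by_cases hy : ∀ j : Fin n, j ≠ k → y j = x j
      · have hyz : ∀ j : Fin n, j ≠ k → y j = z j := fun j hj => (hy j hj).trans (hz j hj).symm
        rw [if_pos hz, if_pos hy, if_pos hyz]; ring
      · have hyz : ¬ ∀ j : Fin n, j ≠ k → y j = z j :=
          fun h => hy (fun j hj => (h j hj).trans (hz j hj))
        rw [if_pos hz, if_neg hy, if_neg hyz]; ring
    · rw [if_neg hz]; ring
  rw [Finset.sum_congr rfl (fun z _ => key z), ← Finset.mul_sum, sum_indicator]
  simp only [refMat]
  field_simp

lemma refMat_mul_ne (m n : ℕ) [NeZero m] {j k : Fin n} (hjk : j ≠ k) (x y : Fin n → ZMod m) :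
    (refMat m n j * refMat m n k) x y
      = (1 / (m : ℝ))^2 * (if ∀ i : Fin n, i ≠ j → i ≠ k → y i = x i then 1 else 0) := by
  rw [Matrix.mul_apply]
  rw [Finset.sum_eq_single (Function.update x j (y j))]
  · simp only [refMat]
    have h1 : ∀ i : Fin n, i ≠ j → Function.update x j (y j) i = x i :=
      fun i hi => Function.update_of_ne hi _ _
    rw [if_pos h1]
    have h2 : (∀ i : Fin n, i ≠ k → y i = Function.update x j (y j) i)
        ↔ (∀ i : Fin n, i ≠ j → i ≠ k → y i = x i) := by
      constructor
      · intro H i hij hik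
        rw [H i hik, Function.update_of_ne hij]
      · intro H i hik
        rcases eq_or_ne i j with rfl | hij
        · rw [Function.update_self]
        · rw [Function.update_of_ne hij]; exact H i hij hik
    rw [if_congr h2 rfl rfl]
    ring
  · intro z _ hz
    obtain ⟨i, hi⟩ := Function.ne_iff.1 hz
    rcases eq_or_ne i j with rfl | hij
    · rw [Function.update_self] at hi
      have : ¬ ∀ i' : Fin n, i' ≠ k → y i' = z i' := fun H => hi ((H i hjk).symm)
      simp only [refMat, if_neg this, mul_zero, zero_mul]
    · rw [Function.update_of_ne hij] at hi
      have : ¬ ∀ i' : Fin n, i' ≠ j → z i' = x i' := fun H => hi (H i hij)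
      simp only [refMat, if_neg this, mul_zero, zero_mul]
  · intro h
    exact absurd (Finset.mem_univ _) h

lemma refMat_commute (m n : ℕ) [NeZero m] (j k : Fin n) :
    Commute (refMat m n j) (refMat m n k) := by
  rcases eq_or_ne j k with rfl | hjk
  · exact Commute.refl _
  · show _ = _
    ext x y
    rw [refMat_mul_ne m n hjk, refMat_mul_ne m n hjk.symm]
    congr 1
    exact if_congr ⟨fun H i h1 h2 => H i h2 h1, fun H i h1 h2 => H i h2 h1⟩ rfl rfl

lemma mixMat_commute (m n : ℕ) [NeZero m] (cf df : Fin n → ℝ) (j k : Fin n) :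
    Commute (cf j • (1 : Matrix (Fin n → ZMod m) (Fin n → ZMod m) ℝ) + df j • refMat m n j)
      (cf k • (1 : Matrix (Fin n → ZMod m) (Fin n → ZMod m) ℝ) + df k • refMat m n k) := by
  apply Commute.add_left
  · apply Commute.add_right
    · exact ((Commute.one_left _).smul_left _).smul_right _
    · exact ((Commute.one_left _).smul_left _).smul_right _
  · apply Commute.add_right
    · exact ((Commute.one_right _).smul_left _).smul_right _
    · exact ((refMat_commute m n j k).smul_left _).smul_right _

lemma noncommProd_entry (m n : ℕ) [NeZero m] (cf df : Fin n → ℝ) (S : Finset (Fin n))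
    (x y : Fin n → ZMod m) :
    (S.noncommProd
        (fun k => cf k • (1 : Matrix (Fin n → ZMod m) (Fin n → ZMod m) ℝ) + df k • refMat m n k)
        (fun j _ k _ _ => mixMat_commute m n cf df j k)) x y
      = (∏ k ∈ S, (cf k * (if y k = x k then 1 else 0) + df k * (1 / (m : ℝ)))) *
        (if ∀ j : Fin n, j ∉ S → y j = x j then 1 else 0) := by
  induction S using Finset.induction_on generalizing x with
  | empty =>
    show (1 : Matrix (Fin n → ZMod m) (Fin n → ZMod m) ℝ) x y = _
    simp only [Finset.prod_empty, Finset.notMem_empty, not_false_iff, one_mul]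
    rw [Matrix.one_apply]
    have : (x = y) ↔ (∀ j : Fin n, ¬ False → y j = x j) := by
      simp [funext_iff, eq_comm]
    exact if_congr (by simpa using this) rfl rfl
  | @insert a S ha IH =>
    refine (congrFun (congrFun (Finset.noncommProd_insert_of_notMem S a
      (fun k => cf k • (1 : Matrix (Fin n → ZMod m) (Fin n → ZMod m) ℝ) + df k • refMat m n k)
      (fun j _ k _ _ => mixMat_commute m n cf df j k) ha) x) y).trans ?_
    rw [Matrix.mul_apply]
    rw [Finset.sum_eq_single (Function.update x a (y a))]
    · rw [IH]
      simp only [Matrix.add_apply, Matrix.smul_apply, Matrix.one_apply, refMat, smul_eq_mul]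
      have h1 : ∀ i : Fin n, i ≠ a → Function.update x a (y a) i = x i :=
        fun i hi => Function.update_of_ne hi _ _
      have h2 : (x = Function.update x a (y a)) ↔ (y a = x a) := by
        rw [eq_comm, Function.update_eq_self_iff]
      have h3 : (∏ k ∈ S, (cf k * (if y k = Function.update x a (y a) k then 1 else 0)
            + df k * (1 / (m : ℝ))))
          = ∏ k ∈ S, (cf k * (if y k = x k then 1 else 0) + df k * (1 / (m : ℝ))) := by
        refine Finset.prod_congr rfl fun k hk => ?_
        have hka : k ≠ a := fun h => ha (h ▸ hk)
        rw [h1 k hka]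
      have h4 : (∀ j : Fin n, j ∉ S → y j = Function.update x a (y a) j)
          ↔ (∀ j : Fin n, j ∉ insert a S → y j = x j) := by
        constructor
        · intro H j hj
          rw [Finset.mem_insert, not_or] at hj
          rw [H j hj.2, Function.update_of_ne hj.1]
        · intro H j hj
          rcases eq_or_ne j a with rfl | hja
          · rw [Function.update_self]
          · rw [Function.update_of_ne hja]
            exact H j (by simp [hja, hj])
      rw [h3, if_congr h4 rfl rfl, if_pos h1, if_congr h2 rfl rfl,
        Finset.prod_insert ha]
      ring
    · intro z _ hz
      obtain ⟨i, hi⟩ := Function.ne_iff.1 hz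
      rcases eq_or_ne i a with rfl | hia
      · rw [Function.update_self] at hi
        rw [IH]
        have : ¬ ∀ j : Fin n, j ∉ S → y j = z j := fun H => hi ((H i ha).symm)
        rw [if_neg this, mul_zero, mul_zero]
      · rw [Function.update_of_ne hia] at hi
        have hxz : x ≠ z := fun h => hi (congrFun h i).symm
        simp only [Matrix.add_apply, Matrix.smul_apply, Matrix.one_apply, refMat, smul_eq_mul]
        rw [if_neg hxz]
        have : ¬ ∀ j : Fin n, j ≠ a → z j = x j := fun H => hi (H i hia)
        rw [if_neg this]
        ring
    · intro h
      exact absurd (Finset.mem_univ _) h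

lemma exp_coordRefresh (m n : ℕ) [NeZero m] (α : Fin n → ℝ) (hα : ∑ k : Fin n, α k = 1)
    (t : ℝ) (x y : Fin n → ZMod m) :
    NormedSpace.exp (t • (coordRefresh m n α - 1)) x y
      = ∏ k : Fin n, (Real.exp (-(t * α k)) * (if y k = x k then 1 else 0)
          + (1 - Real.exp (-(t * α k))) * (1 / (m : ℝ))) := by
  have hP : coordRefresh m n α = ∑ k : Fin n, α k • refMat m n k := by
    ext x y
    simp [coordRefresh, refMat, Matrix.sum_apply, mul_assoc]
  have hsplit : t • (coordRefresh m n α - 1)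
      = ∑ k : Fin n, (t * α k) • (refMat m n k - 1) := by
    rw [hP, smul_sub, Finset.smul_sum]
    simp only [smul_sub]
    rw [Finset.sum_sub_distrib]
    congr 1
    · exact Finset.sum_congr rfl fun k _ => by rw [smul_smul]
    · rw [← Finset.sum_smul, ← Finset.mul_sum, hα, mul_one]
  have hpair : (↑(Finset.univ : Finset (Fin n)) : Set (Fin n)).Pairwise
      (Function.onFun Commute fun k => (t * α k) • (refMat m n k - 1)) := by
    intro j _ k _ _
    have h1 : Commute (refMat m n j - 1) (refMat m n k - 1) :=
      ((refMat_commute m n j k).sub_right (Commute.one_right _)).sub_left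
        ((Commute.one_left _).sub_right (Commute.one_left _))
    exact (h1.smul_left _).smul_right _
  rw [hsplit, Matrix.exp_sum_of_commute _ _ hpair]
  have hexp : ∀ k ∈ (Finset.univ : Finset (Fin n)),
      NormedSpace.exp ((t * α k) • (refMat m n k - 1))
        = Real.exp (-(t * α k)) • (1 : Matrix (Fin n → ZMod m) (Fin n → ZMod m) ℝ)
          + (1 - Real.exp (-(t * α k))) • refMat m n k := by
    intro k _
    letI : SeminormedRing (Matrix (Fin n → ZMod m) (Fin n → ZMod m) ℝ) :=
      Matrix.linftyOpSemiNormedRing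
    letI : NormedRing (Matrix (Fin n → ZMod m) (Fin n → ZMod m) ℝ) :=
      Matrix.linftyOpNormedRing
    letI : NormedAlgebra ℝ (Matrix (Fin n → ZMod m) (Fin n → ZMod m) ℝ) :=
      Matrix.linftyOpNormedAlgebra
    exact exp_of_idem_sub_one _ _ (refMat_idem m n k)
  refine (congrFun (congrFun (Finset.noncommProd_congr rfl hexp _) x) y).trans ?_
  rw [show (Finset.univ.noncommProd
        (fun k => Real.exp (-(t * α k)) • (1 : Matrix (Fin n → ZMod m) (Fin n → ZMod m) ℝ)
          + (1 - Real.exp (-(t * α k))) • refMat m n k) _) x y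
      = _ from noncommProd_entry m n (fun k => Real.exp (-(t * α k)))
        (fun k => 1 - Real.exp (-(t * α k))) Finset.univ x y]
  rw [if_pos (fun j hj => absurd (Finset.mem_univ j) hj), mul_one]

lemma zmSep_eq (m n : ℕ) [NeZero m] (hm : 2 ≤ m) (α : Fin n → ℝ)
    (hα : ∑ k : Fin n, α k = 1) (t : ℝ) (ht : ∀ k, 0 ≤ t * α k) :
    zmSep m n α t = 1 - ∏ k : Fin n, (1 - Real.exp (-(t * α k))) := by
  have hm0 : (0 : ℝ) < m := by positivity
  haveI : Fact (1 < m) := ⟨hm⟩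
  have hG : ∀ x y : Fin n → ZMod m,
      (m : ℝ) ^ n * (NormedSpace.exp (t • (coordRefresh m n α - 1))) x y
        = ∏ k : Fin n, ((m : ℝ) * Real.exp (-(t * α k)) * (if y k = x k then 1 else 0)
            + (1 - Real.exp (-(t * α k)))) := by
    intro x y
    rw [exp_coordRefresh m n α hα t x y]
    rw [show ((m : ℝ) ^ n) = ∏ _k : Fin n, (m : ℝ) by
      rw [Finset.prod_const, Finset.card_univ, Fintype.card_fin]]
    rw [← Finset.prod_mul_distrib]
    refine Finset.prod_congr rfl fun k _ => ?_
    field_simp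
  have hfac_le : ∀ (k : Fin n) (x y : Fin n → ZMod m),
      (1 - Real.exp (-(t * α k)))
        ≤ (m : ℝ) * Real.exp (-(t * α k)) * (if y k = x k then 1 else 0)
          + (1 - Real.exp (-(t * α k))) := by
    intro k x y
    have : (0 : ℝ) ≤ (m : ℝ) * Real.exp (-(t * α k)) * (if y k = x k then 1 else 0) := by
      positivity
    linarith
  have hfac_nn : ∀ k : Fin n, (0 : ℝ) ≤ 1 - Real.exp (-(t * α k)) := by
    intro k
    have : Real.exp (-(t * α k)) ≤ 1 := Real.exp_le_one_iff.2 (by linarith [ht k])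
    linarith
  have hprod_le : ∀ x y : Fin n → ZMod m,
      ∏ k : Fin n, (1 - Real.exp (-(t * α k)))
        ≤ (m : ℝ) ^ n * (NormedSpace.exp (t • (coordRefresh m n α - 1))) x y := by
    intro x y
    rw [hG x y]
    exact Finset.prod_le_prod (fun k _ => hfac_nn k) (fun k _ => hfac_le k x y)
  unfold zmSep
  refine le_antisymm ?_ ?_
  · refine ciSup_le fun x => ciSup_le fun y => ?_
    linarith [hprod_le x y]
  · set x₀ : Fin n → ZMod m := fun _ => 0
    set y₀ : Fin n → ZMod m := fun _ => 1
    have hval : (1 : ℝ) - (m : ℝ) ^ n * (NormedSpace.exp (t • (coordRefresh m n α - 1))) x₀ y₀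
        = 1 - ∏ k : Fin n, (1 - Real.exp (-(t * α k))) := by
      rw [hG x₀ y₀]
      congr 1
      refine Finset.prod_congr rfl fun k _ => ?_
      have : (y₀ k ≠ x₀ k) := by
        simp only [x₀, y₀]
        exact one_ne_zero
      rw [if_neg this, mul_zero, zero_add]
    rw [← hval]
    have step1 : (1 : ℝ) - (m : ℝ) ^ n * (NormedSpace.exp (t • (coordRefresh m n α - 1))) x₀ y₀
        ≤ ⨆ y : Fin n → ZMod m,
            (1 - (m : ℝ) ^ n * (NormedSpace.exp (t • (coordRefresh m n α - 1))) x₀ y) :=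
      le_ciSup (f := fun y : Fin n → ZMod m =>
        (1 - (m : ℝ) ^ n * (NormedSpace.exp (t • (coordRefresh m n α - 1))) x₀ y))
        (Set.Finite.bddAbove (Set.finite_range _)) y₀
    refine step1.trans ?_
    exact le_ciSup (f := fun x : Fin n → ZMod m => ⨆ y : Fin n → ZMod m,
        (1 - (m : ℝ) ^ n * (NormedSpace.exp (t • (coordRefresh m n α - 1))) x y))
        (Set.Finite.bddAbove (Set.finite_range _)) x₀

-- eventual formula for the P-chain
lemma P_formula (m : ℕ) [NeZero m] (hm : 2 ≤ m) (c : ℝ) :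
    ∀ᶠ n : ℕ in atTop,
      zmSep m n (fun _ => 1 / n) ((n : ℝ) * (Real.log n + c))
        = 1 - (1 - Real.exp (-c) / (n : ℝ)) ^ n := by
  have hev3 : ∀ᶠ n : ℕ in atTop, Real.exp (-c) ≤ (n : ℝ) :=
    tendsto_natCast_atTop_atTop.eventually_ge_atTop _
  filter_upwards [eventually_ge_atTop 1, hev3] with n hn1 hnc
  have hn0 : (0 : ℝ) < n := by exact_mod_cast Nat.lt_of_lt_of_le Nat.zero_lt_one hn1
  have hlog : 0 ≤ Real.log n + c := by
    have := (Real.le_log_iff_exp_le hn0).2 hnc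
    linarith
  have htα : ∀ k : Fin n, ((n : ℝ) * (Real.log n + c)) * (1 / n) = Real.log n + c := by
    intro k; field_simp
  rw [zmSep_eq m n hm _ (by
      rw [Finset.sum_const, Finset.card_univ, Fintype.card_fin, nsmul_eq_mul]
      field_simp) _ (fun k => by rw [htα k]; exact hlog)]
  congr 1
  have hexp : Real.exp (-(Real.log n + c)) = Real.exp (-c) / n := by
    rw [neg_add, Real.exp_add, Real.exp_neg (Real.log n), Real.exp_log hn0]
    ring
  calc ∏ _k : Fin n, (1 - Real.exp (-(((n : ℝ) * (Real.log n + c)) * (1 / n))))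
      = ∏ _k : Fin n, (1 - Real.exp (-c) / n) := by
        refine Finset.prod_congr rfl fun k _ => ?_
        rw [htα k, hexp]
    _ = (1 - Real.exp (-c) / (n : ℝ)) ^ n := by
        rw [Finset.prod_const, Finset.card_univ, Fintype.card_fin]

lemma Q_formula (m : ℕ) [NeZero m] (hm : 2 ≤ m) {b : ℝ} (hb0 : 0 < b) (hb1 : b < 1) (c : ℝ) :
    ∀ᶠ n : ℕ in atTop,
      zmSep m n (fun k => if (k : ℕ) = 0 then 1 / n + b else 1 / n - b / ((n : ℝ) - 1))
          ((1 / (n : ℝ) - b / ((n : ℝ) - 1))⁻¹ * (Real.log ((n : ℝ) - 1) + c))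
        = 1 - (1 - Real.exp (-(((1 / (n : ℝ) - b / ((n : ℝ) - 1))⁻¹ *
              (Real.log ((n : ℝ) - 1) + c)) * (1 / (n : ℝ) + b)))) *
            (1 - Real.exp (-c) / ((n : ℝ) - 1)) ^ (n - 1) := by
  have hev2 : ∀ᶠ n : ℕ in atTop, Real.exp (-c) ≤ (n : ℝ) - 1 := by
    have h : Tendsto (fun n : ℕ => (n : ℝ) - 1) atTop atTop :=
      tendsto_atTop_add_const_right atTop (-1) tendsto_natCast_atTop_atTop
    exact h.eventually_ge_atTop _
  have hev4 : ∀ᶠ n : ℕ in atTop, b * (n : ℝ) < (n : ℝ) - 1 := by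
    have h : Tendsto (fun n : ℕ => (n : ℝ) * (1 - b) - 1) atTop atTop :=
      tendsto_atTop_add_const_right atTop (-1)
        (tendsto_natCast_atTop_atTop.atTop_mul_const (by linarith))
    filter_upwards [h.eventually_ge_atTop 1] with n hn
    nlinarith [hn]
  filter_upwards [eventually_ge_atTop 2, hev2, hev4] with n hn2 hnc hnb
  haveI : NeZero n := ⟨by omega⟩
  have hn0 : (0 : ℝ) < n := by exact_mod_cast Nat.lt_of_lt_of_le Nat.zero_lt_two hn2
  have hn1 : (0 : ℝ) < (n : ℝ) - 1 := by
    have : (2 : ℝ) ≤ n := by exact_mod_cast hn2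
    linarith
  set an : ℝ := 1 / (n : ℝ) - b / ((n : ℝ) - 1) with han
  set A : ℝ := 1 / (n : ℝ) + b with hA
  set Lg : ℝ := Real.log ((n : ℝ) - 1) + c with hLg
  have han0 : 0 < an := by
    rw [han, sub_pos, div_lt_div_iff₀ hn1 hn0]
    linarith
  have hLg0 : 0 ≤ Lg := by
    have := (Real.le_log_iff_exp_le hn1).2 hnc
    rw [hLg]; linarith
  have ht0 : 0 ≤ an⁻¹ * Lg := mul_nonneg (inv_nonneg.2 han0.le) hLg0
  have hA0 : 0 ≤ A := by
    rw [hA]; positivity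
  have hzero : ((0 : Fin n) : ℕ) = 0 := rfl
  have hα : ∑ k : Fin n, (if (k : ℕ) = 0 then A else an) = 1 := by
    rw [← Finset.add_sum_erase _ _ (Finset.mem_univ (0 : Fin n))]
    rw [if_pos hzero]
    have herase : ∀ k ∈ Finset.univ.erase (0 : Fin n),
        (if (k : ℕ) = 0 then A else an) = an := by
      intro k hk
      have : k ≠ 0 := (Finset.mem_erase.1 hk).1
      rw [if_neg (fun h => this (Fin.ext (by simpa using h)))]
    rw [Finset.sum_congr rfl herase, Finset.sum_const, Finset.card_erase_of_mem
      (Finset.mem_univ _), Finset.card_univ, Fintype.card_fin, nsmul_eq_mul]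
    have hcast : ((n - 1 : ℕ) : ℝ) = (n : ℝ) - 1 := by
      rw [Nat.cast_sub (by omega), Nat.cast_one]
    rw [hcast, hA, han]
    field_simp
    ring
  have ht : ∀ k : Fin n, 0 ≤ (an⁻¹ * Lg) * (if (k : ℕ) = 0 then A else an) := by
    intro k
    split_ifs
    · exact mul_nonneg ht0 hA0
    · exact mul_nonneg ht0 han0.le
  rw [zmSep_eq m n hm _ hα _ ht]
  congr 1
  rw [← Finset.mul_prod_erase _ _ (Finset.mem_univ (0 : Fin n))]
  rw [if_pos hzero]
  have herase : ∀ k ∈ Finset.univ.erase (0 : Fin n),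
      (1 - Real.exp (-((an⁻¹ * Lg) * (if (k : ℕ) = 0 then A else an))))
        = 1 - Real.exp (-c) / ((n : ℝ) - 1) := by
    intro k hk
    have hkne : k ≠ 0 := (Finset.mem_erase.1 hk).1
    rw [if_neg (fun h => hkne (Fin.ext (by simpa using h)))]
    have h1 : (an⁻¹ * Lg) * an = Lg := by
      field_simp
    rw [h1]
    have h2 : Real.exp (-Lg) = Real.exp (-c) / ((n : ℝ) - 1) := by
      rw [hLg, neg_add, Real.exp_add, Real.exp_neg (Real.log _), Real.exp_log hn1]
      ring
    rw [h2]
  rw [Finset.prod_congr rfl herase, Finset.prod_const, Finset.card_erase_of_mem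
    (Finset.mem_univ _), Finset.card_univ, Fintype.card_fin]

theorem perturbed_zm_walk_profile (m : ℕ) [NeZero m] (hm : 2 ≤ m) (b : ℝ)
    (hb : b ∈ Set.Ioo (0 : ℝ) 1) (c : ℝ) :
    Tendsto (fun n : ℕ =>
        |zmSep m n (fun k => if (k : ℕ) = 0 then 1 / n + b else 1 / n - b / ((n : ℝ) - 1))
            ((1 / (n : ℝ) - b / ((n : ℝ) - 1))⁻¹ * (Real.log ((n : ℝ) - 1) + c)) -
          zmSep m n (fun _ => 1 / n) ((n : ℝ) * (Real.log n + c))|) atTop (nhds 0) ∧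
    Tendsto (fun n : ℕ =>
        zmSep m n (fun k => if (k : ℕ) = 0 then 1 / n + b else 1 / n - b / ((n : ℝ) - 1))
          ((1 / (n : ℝ) - b / ((n : ℝ) - 1))⁻¹ * (Real.log ((n : ℝ) - 1) + c)))
      atTop (nhds (1 - Real.exp (-Real.exp (-c)))) := by
  obtain ⟨hb0, hb1⟩ := hb
  -- limit of (1 - exp(-c)/n)^n
  have hu : Tendsto (fun n : ℕ => (1 - Real.exp (-c) / (n : ℝ)) ^ n) atTop
      (nhds (Real.exp (-Real.exp (-c)))) := by
    have := Real.tendsto_one_add_div_pow_exp (-Real.exp (-c))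
    exact this.congr fun n => by rw [neg_div, ← sub_eq_add_neg]
  -- limit of (1 - exp(-c)/(n-1))^(n-1)
  have hv : Tendsto (fun n : ℕ => (1 - Real.exp (-c) / ((n : ℝ) - 1)) ^ (n - 1)) atTop
      (nhds (Real.exp (-Real.exp (-c)))) := by
    have h1 := hu.comp (tendsto_sub_atTop_nat 1)
    refine h1.congr' ?_
    filter_upwards [eventually_ge_atTop 1] with n hn
    have : ((n - 1 : ℕ) : ℝ) = (n : ℝ) - 1 := by
      rw [Nat.cast_sub hn, Nat.cast_one]
    simp only [Function.comp_apply, this]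
  -- the epsilon sequence tends to 0
  have hε : Tendsto (fun n : ℕ => Real.exp (-(((1 / (n : ℝ) - b / ((n : ℝ) - 1))⁻¹ *
      (Real.log ((n : ℝ) - 1) + c)) * (1 / (n : ℝ) + b)))) atTop (nhds 0) := by
    have hbound : ∀ᶠ n : ℕ in atTop,
        Real.exp (-(((1 / (n : ℝ) - b / ((n : ℝ) - 1))⁻¹ *
          (Real.log ((n : ℝ) - 1) + c)) * (1 / (n : ℝ) + b)))
          ≤ Real.exp (-c) / ((n : ℝ) - 1) := by
      have hev2 : ∀ᶠ n : ℕ in atTop, Real.exp (-c) ≤ (n : ℝ) - 1 := by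
        have h : Tendsto (fun n : ℕ => (n : ℝ) - 1) atTop atTop :=
          tendsto_atTop_add_const_right atTop (-1) tendsto_natCast_atTop_atTop
        exact h.eventually_ge_atTop _
      have hev4 : ∀ᶠ n : ℕ in atTop, b * (n : ℝ) < (n : ℝ) - 1 := by
        have h : Tendsto (fun n : ℕ => (n : ℝ) * (1 - b) - 1) atTop atTop :=
          tendsto_atTop_add_const_right atTop (-1)
            (tendsto_natCast_atTop_atTop.atTop_mul_const (by linarith))
        filter_upwards [h.eventually_ge_atTop 1] with n hn
        nlinarith [hn]
      filter_upwards [eventually_ge_atTop 2, hev2, hev4] with n hn2 hnc hnb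
      have hn0 : (0 : ℝ) < n := by exact_mod_cast Nat.lt_of_lt_of_le Nat.zero_lt_two hn2
      have hn1 : (0 : ℝ) < (n : ℝ) - 1 := by
        have : (2 : ℝ) ≤ n := by exact_mod_cast hn2
        linarith
      set an : ℝ := 1 / (n : ℝ) - b / ((n : ℝ) - 1) with han
      set A : ℝ := 1 / (n : ℝ) + b with hA
      set Lg : ℝ := Real.log ((n : ℝ) - 1) + c with hLg
      have han0 : 0 < an := by
        rw [han, sub_pos, div_lt_div_iff₀ hn1 hn0]
        linarith
      have hLg0 : 0 ≤ Lg := by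
        have := (Real.le_log_iff_exp_le hn1).2 hnc
        rw [hLg]; linarith
      have hAan : an ≤ A := by
        rw [hA, han]
        have : 0 < b / ((n : ℝ) - 1) := by positivity
        linarith
      have hkey : Lg ≤ (an⁻¹ * Lg) * A := by
        have h1 : (1 : ℝ) ≤ an⁻¹ * A := by
          rw [← div_eq_inv_mul, le_div_iff₀ han0]
          linarith
        calc Lg = Lg * 1 := (mul_one Lg).symm
          _ ≤ Lg * (an⁻¹ * A) := by
              exact mul_le_mul_of_nonneg_left h1 hLg0
          _ = (an⁻¹ * Lg) * A := by ring
      have h2 : Real.exp (-((an⁻¹ * Lg) * A)) ≤ Real.exp (-Lg) :=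
        Real.exp_le_exp.2 (by linarith)
      have h3 : Real.exp (-Lg) = Real.exp (-c) / ((n : ℝ) - 1) := by
        rw [hLg, neg_add, Real.exp_add, Real.exp_neg (Real.log _), Real.exp_log hn1]
        ring
      rw [← h3]
      exact h2
    have hlim : Tendsto (fun n : ℕ => Real.exp (-c) / ((n : ℝ) - 1)) atTop (nhds 0) := by
      have h : Tendsto (fun n : ℕ => (n : ℝ) - 1) atTop atTop :=
        tendsto_atTop_add_const_right atTop (-1) tendsto_natCast_atTop_atTop
      have := h.inv_tendsto_atTop.const_mul (Real.exp (-c))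
      simpa [div_eq_mul_inv] using this
    refine squeeze_zero' ?_ hbound hlim
    filter_upwards with n
    positivity
  -- assembled limits
  have hQ : Tendsto (fun n : ℕ =>
      zmSep m n (fun k => if (k : ℕ) = 0 then 1 / n + b else 1 / n - b / ((n : ℝ) - 1))
        ((1 / (n : ℝ) - b / ((n : ℝ) - 1))⁻¹ * (Real.log ((n : ℝ) - 1) + c)))
      atTop (nhds (1 - Real.exp (-Real.exp (-c)))) := by
    have hlim : Tendsto (fun n : ℕ =>
        1 - (1 - Real.exp (-(((1 / (n : ℝ) - b / ((n : ℝ) - 1))⁻¹ *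
            (Real.log ((n : ℝ) - 1) + c)) * (1 / (n : ℝ) + b)))) *
          (1 - Real.exp (-c) / ((n : ℝ) - 1)) ^ (n - 1)) atTop
        (nhds (1 - Real.exp (-Real.exp (-c)))) := by
      have h1 := (tendsto_const_nhds (x := (1:ℝ)) (f := atTop)).sub hε
      have h2 := h1.mul hv
      have h3 := (tendsto_const_nhds (x := (1:ℝ)) (f := atTop)).sub h2
      simpa using h3
    exact Filter.Tendsto.congr' (Filter.EventuallyEq.symm (Q_formula m hm hb0 hb1 c)) hlim
  have hP : Tendsto (fun n : ℕ => zmSep m n (fun _ => 1 / n) ((n : ℝ) * (Real.log n + c)))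
      atTop (nhds (1 - Real.exp (-Real.exp (-c)))) := by
    have hlim := (tendsto_const_nhds (x := (1:ℝ)) (f := atTop)).sub hu
    exact Filter.Tendsto.congr' (Filter.EventuallyEq.symm (P_formula m hm c)) hlim
  constructor
  · have := hQ.sub hP
    rw [sub_self] at this
    simpa using this.abs
  · exact hQ
end

section
/- For even n ≥ 2 put N := n/2 and let P_n be the Bernoulli–Laplace kernel on {0,1,…,N}. Let s_{n,N}(t) := max_{y} (1 − exp(t(P_n − I))(N,y)/π_n(y)) be the continuous-time separation distance started from the endpoint state N. If along a strictly increasing sequence of even integers n, s_{n,N}((n/4)(log n + c)) converges as n → ∞ for every c ∈ ℝ, to a limit Φ(c), then Φ is continuous on ℝ. -/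
open Filter Finset

/-- The Bernoulli–Laplace kernel on `{0,1,…,N}` (two urns of size `N`;
the state records the number of red balls in the left urn). -/
noncomputable def BLKernel (N : ℕ) : Matrix (Fin (N + 1)) (Fin (N + 1)) ℝ :=
  fun x y =>
    if (y : ℕ) + 1 = (x : ℕ) then ((x : ℝ) / N) ^ 2
    else if (y : ℕ) = (x : ℕ) + 1 then (((N : ℝ) - (x : ℕ)) / N) ^ 2
    else if y = x then 2 * (x : ℕ) * ((N : ℝ) - (x : ℕ)) / N ^ 2
    else 0

/-- The hypergeometric stationary distribution of the Bernoulli–Laplace chain. -/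
noncomputable def BLpi (N : ℕ) (x : Fin (N + 1)) : ℝ :=
  ((N.choose x : ℝ)) ^ 2 / ((2 * N).choose N : ℝ)

/-- The continuous-time separation distance of the Bernoulli–Laplace chain
started from the endpoint state `N`. -/
noncomputable def BLsepEndpoint (N : ℕ) (t : ℝ) : ℝ :=
  ⨆ y : Fin (N + 1),
    (1 - (NormedSpace.exp (t • (BLKernel N - 1))) (Fin.last N) y / BLpi N y)

namespace BLaux

open Matrix

/-- The lazy kernel `(P+I)/2`. -/
noncomputable def Lmat (N : ℕ) : Matrix (Fin (N + 1)) (Fin (N + 1)) ℝ :=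
  (2⁻¹ : ℝ) • (BLKernel N + 1)

/-- Extension of a vector on `Fin (N+1)` to `ℕ` by zero. -/
noncomputable def ext (N : ℕ) (w : Fin (N + 1) → ℝ) (i : ℕ) : ℝ :=
  if h : i < N + 1 then w ⟨i, h⟩ else 0

lemma ext_lt {N : ℕ} (w : Fin (N + 1) → ℝ) {i : ℕ} (h : i < N + 1) :
    ext N w i = w ⟨i, h⟩ := dif_pos h

lemma ext_ge {N : ℕ} (w : Fin (N + 1) → ℝ) {i : ℕ} (h : ¬ i < N + 1) :
    ext N w i = 0 := dif_neg h

lemma ext_fin {N : ℕ} (w : Fin (N + 1) → ℝ) (z : Fin (N + 1)) :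
    ext N w (z : ℕ) = w z := by rw [ext_lt w z.isLt]

/-- Monotonicity predicate via the extension. -/
def MonoE (N : ℕ) (w : Fin (N + 1) → ℝ) : Prop :=
  ∀ m : ℕ, m + 1 ≤ N → ext N w m ≤ ext N w (m + 1)

/-- Convexity predicate via the extension. -/
def ConvE (N : ℕ) (w : Fin (N + 1) → ℝ) : Prop :=
  ∀ m : ℕ, m + 2 ≤ N → 2 * ext N w (m + 1) ≤ ext N w m + ext N w (m + 2)

/-- The value of the lazy kernel applied to a vector, as a real formula. -/
noncomputable def Aval (n x u v z : ℝ) : ℝ :=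
  (v + (x / n) ^ 2 * u + 2 * x * (n - x) / n ^ 2 * v + ((n - x) / n) ^ 2 * z) / 2

/-- Row computation for the Bernoulli–Laplace kernel. -/
lemma mulVec_BLKernel {N : ℕ} (w : Fin (N + 1) → ℝ) (m : ℕ) (hm : m < N + 1) :
    (BLKernel N *ᵥ w) ⟨m, hm⟩ =
      ((m : ℝ) / N) ^ 2 * ext N w (m - 1)
        + 2 * m * ((N : ℝ) - m) / (N : ℝ) ^ 2 * ext N w m
        + (((N : ℝ) - m) / N) ^ 2 * ext N w (m + 1) := by
  have step : ∀ z : Fin (N + 1), BLKernel N ⟨m, hm⟩ z * w z =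
      (fun i : ℕ => (if i + 1 = m then ((m : ℝ) / N) ^ 2 else 0) * ext N w i
        + (if i = m then 2 * m * ((N : ℝ) - m) / (N : ℝ) ^ 2 else 0) * ext N w i
        + (if i = m + 1 then (((N : ℝ) - m) / N) ^ 2 else 0) * ext N w i) (z : ℕ) := by
    intro z
    have hz : ext N w (z : ℕ) = w z := dif_pos z.isLt
    simp only [BLKernel, hz, Fin.val_mk]
    by_cases h1 : (z : ℕ) + 1 = m
    · rw [if_pos h1, if_pos h1, if_neg (by omega), if_neg (by omega)]; ring
    · rw [if_neg h1, if_neg h1]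
      by_cases h2 : (z : ℕ) = m + 1
      · rw [if_pos h2, if_pos h2, if_neg (by omega)]; ring
      · rw [if_neg h2, if_neg h2]
        by_cases h3 : z = (⟨m, hm⟩ : Fin (N + 1))
        · rw [if_pos h3, if_pos (by rw [h3] : (z : ℕ) = m)]; ring
        · rw [if_neg h3, if_neg (fun hh => h3 (Fin.ext hh))]; ring
  have : (BLKernel N *ᵥ w) ⟨m, hm⟩ = ∑ z : Fin (N + 1),
      (fun i : ℕ => (if i + 1 = m then ((m : ℝ) / N) ^ 2 else 0) * ext N w i
        + (if i = m then 2 * m * ((N : ℝ) - m) / (N : ℝ) ^ 2 else 0) * ext N w i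
        + (if i = m + 1 then (((N : ℝ) - m) / N) ^ 2 else 0) * ext N w i) (z : ℕ) := by
    rw [Matrix.mulVec, dotProduct]
    exact Finset.sum_congr rfl (fun z _ => step z)
  rw [this, Fin.sum_univ_eq_sum_range (fun i : ℕ =>
      (if i + 1 = m then ((m : ℝ) / N) ^ 2 else 0) * ext N w i
        + (if i = m then 2 * m * ((N : ℝ) - m) / (N : ℝ) ^ 2 else 0) * ext N w i
        + (if i = m + 1 then (((N : ℝ) - m) / N) ^ 2 else 0) * ext N w i) (N + 1),
    Finset.sum_add_distrib, Finset.sum_add_distrib]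
  congr 1
  · congr 1
    · -- first sum : target ((m:ℝ)/N)^2 * ext N w (m-1)
      rcases Nat.eq_zero_or_pos m with hm0 | hmpos
      · subst hm0
        rw [Finset.sum_eq_zero]
        · norm_num
        · intro i _
          rw [if_neg (by omega)]; ring
      · obtain ⟨m', rfl⟩ : ∃ m', m = m' + 1 := ⟨m - 1, by omega⟩
        have : ∀ i ∈ Finset.range (N + 1),
            (if i + 1 = m' + 1 then (((m' + 1 : ℕ) : ℝ) / N) ^ 2 else 0) * ext N w i
            = if i = m' then (((m' + 1 : ℕ) : ℝ) / N) ^ 2 * ext N w i else 0 := by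
          intro i _
          by_cases h : i = m'
          · rw [if_pos (by omega), if_pos h]
          · rw [if_neg (by omega), if_neg h]; ring
        rw [Finset.sum_congr rfl this, Finset.sum_ite_eq' (Finset.range (N + 1)) m'
          (fun i => (((m' + 1 : ℕ) : ℝ) / N) ^ 2 * ext N w i),
          if_pos (Finset.mem_range.mpr (by omega))]
        norm_num
    · -- third sum (middle term) : i = m
      have : ∀ i ∈ Finset.range (N + 1),
          (if i = m then 2 * (m:ℝ) * ((N : ℝ) - m) / (N : ℝ) ^ 2 else 0) * ext N w i
          = if i = m then 2 * (m:ℝ) * ((N : ℝ) - m) / (N : ℝ) ^ 2 * ext N w i else 0 := by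
        intro i _
        by_cases h : i = m
        · rw [if_pos h, if_pos h]
        · rw [if_neg h, if_neg h]; ring
      rw [Finset.sum_congr rfl this, Finset.sum_ite_eq' (Finset.range (N + 1)) m
        (fun i => 2 * (m:ℝ) * ((N : ℝ) - m) / (N : ℝ) ^ 2 * ext N w i),
        if_pos (Finset.mem_range.mpr hm)]
  · -- second sum : i = m+1
    have : ∀ i ∈ Finset.range (N + 1),
        (if i = m + 1 then (((N : ℝ) - m) / N) ^ 2 else 0) * ext N w i
        = if i = m + 1 then (((N : ℝ) - m) / N) ^ 2 * ext N w i else 0 := by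
      intro i _
      by_cases h : i = m + 1
      · rw [if_pos h, if_pos h]
      · rw [if_neg h, if_neg h]; ring
    rw [Finset.sum_congr rfl this, Finset.sum_ite_eq' (Finset.range (N + 1)) (m + 1)
      (fun i => (((N : ℝ) - m) / N) ^ 2 * ext N w i)]
    by_cases h : m + 1 < N + 1
    · rw [if_pos (Finset.mem_range.mpr h)]
    · rw [if_neg (by simpa using h), ext_ge w h]
      ring


/-- Row computation for the lazy kernel. -/
lemma mulVec_Lmat {N : ℕ} (w : Fin (N + 1) → ℝ) (m : ℕ) (hm : m < N + 1) :
    (Lmat N *ᵥ w) ⟨m, hm⟩ =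
      Aval (N : ℝ) (m : ℝ) (ext N w (m - 1)) (ext N w m) (ext N w (m + 1)) := by
  have h1 : (Lmat N *ᵥ w) ⟨m, hm⟩
      = 2⁻¹ * ((BLKernel N *ᵥ w) ⟨m, hm⟩ + w ⟨m, hm⟩) := by
    simp only [Lmat, Matrix.smul_mulVec, Matrix.add_mulVec, Matrix.one_mulVec,
      Pi.smul_apply, Pi.add_apply, smul_eq_mul]
  rw [h1, mulVec_BLKernel w m hm, ← ext_lt w hm, Aval]
  ring

/-- Real-variable monotonicity preservation inequality. -/
lemma monoKey {n c w0 w1 w2 w3 : ℝ} (hc1 : 1 ≤ c) (hc2 : c ≤ n)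
    (h0 : 0 ≤ (c - 1) ^ 2 * (w1 - w0)) (h1 : 0 ≤ w2 - w1)
    (h2 : 0 ≤ (n - c) ^ 2 * (w3 - w2)) :
    Aval n (c - 1) w0 w1 w2 ≤ Aval n c w1 w2 w3 := by
  have hn1 : (1 : ℝ) ≤ n := hc1.trans hc2
  have hn0 : (n : ℝ) ≠ 0 := by linarith
  have hC : 0 ≤ 1 - (c ^ 2 + (n - c + 1) ^ 2) / (2 * n ^ 2) := by
    rw [sub_nonneg, div_le_one (by positivity)]
    nlinarith [sq_nonneg (n - c), sq_nonneg (c - 1)]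
  have hid : Aval n c w1 w2 w3 - Aval n (c - 1) w0 w1 w2 =
      ((n - c) ^ 2 * (w3 - w2) + (c - 1) ^ 2 * (w1 - w0)) / (2 * n ^ 2)
        + (1 - (c ^ 2 + (n - c + 1) ^ 2) / (2 * n ^ 2)) * (w2 - w1) := by
    unfold Aval; field_simp; ring
  nlinarith [div_nonneg (add_nonneg h2 h0) (by positivity : (0:ℝ) ≤ 2 * n ^ 2),
    mul_nonneg hC h1]

/-- Real-variable convexity preservation inequality. -/
lemma convKey {n c w0 w1 w2 w3 w4 : ℝ} (hc1 : 1 ≤ c) (hc2 : c ≤ n - 1)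
    (h0 : 0 ≤ (c - 1) ^ 2 * (w2 - 2 * w1 + w0))
    (h1 : 0 ≤ w3 - 2 * w2 + w1)
    (h2 : 0 ≤ (n - 1 - c) ^ 2 * (w4 - 2 * w3 + w2)) :
    2 * Aval n c w1 w2 w3 ≤ Aval n (c - 1) w0 w1 w2 + Aval n (c + 1) w2 w3 w4 := by
  have hn1 : (2 : ℝ) ≤ n := by linarith
  have hn0 : (n : ℝ) ≠ 0 := by linarith
  have hC : 0 ≤ 1 - (c ^ 2 + 2 * c - 1 + (n + 1 - c) ^ 2) / (2 * n ^ 2) := by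
    rw [sub_nonneg, div_le_one (by positivity)]
    nlinarith [mul_nonneg (by linarith : (0:ℝ) ≤ c - 1) (by linarith : (0:ℝ) ≤ n - 1 - c)]
  have hid : Aval n (c - 1) w0 w1 w2 + Aval n (c + 1) w2 w3 w4 - 2 * Aval n c w1 w2 w3 =
      ((n - 1 - c) ^ 2 * (w4 - 2 * w3 + w2) + (c - 1) ^ 2 * (w2 - 2 * w1 + w0)) / (2 * n ^ 2)
        + (1 - (c ^ 2 + 2 * c - 1 + (n + 1 - c) ^ 2) / (2 * n ^ 2)) * (w3 - 2 * w2 + w1) := by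
    unfold Aval; field_simp; ring
  nlinarith [div_nonneg (add_nonneg h2 h0) (by positivity : (0:ℝ) ≤ 2 * n ^ 2),
    mul_nonneg hC h1]


/-- Monotonicity preservation, subtraction-free form. -/
lemma monoKey' {n c0 w0 w1 w2 w3 : ℝ} (hc2 : c0 + 1 ≤ n)
    (h0 : 0 ≤ c0 ^ 2 * (w1 - w0)) (hc0 : 0 ≤ c0) (h1 : 0 ≤ w2 - w1)
    (h2 : 0 ≤ (n - (c0 + 1)) ^ 2 * (w3 - w2)) :
    Aval n c0 w0 w1 w2 ≤ Aval n (c0 + 1) w1 w2 w3 := by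
  have := monoKey (n := n) (c := c0 + 1) (by linarith) hc2 (by simpa using h0) h1 h2
  simpa using this

/-- Convexity preservation, subtraction-free form. -/
lemma convKey' {n c0 w0 w1 w2 w3 w4 : ℝ} (hc2 : c0 + 2 ≤ n)
    (h0 : 0 ≤ c0 ^ 2 * (w2 - 2 * w1 + w0)) (hc0 : 0 ≤ c0)
    (h1 : 0 ≤ w3 - 2 * w2 + w1)
    (h2 : 0 ≤ (n - (c0 + 2)) ^ 2 * (w4 - 2 * w3 + w2)) :
    2 * Aval n (c0 + 1) w1 w2 w3 ≤ Aval n c0 w0 w1 w2 + Aval n (c0 + 2) w2 w3 w4 := by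
  have := convKey (n := n) (c := c0 + 1) (by linarith) (by linarith)
    (by simpa using h0) h1
    (by rw [show n - 1 - (c0 + 1) = n - (c0 + 2) by ring]; exact h2)
  rw [show c0 + 1 - 1 = c0 by ring, show c0 + 1 + 1 = c0 + 2 by ring] at this
  exact this

/-- The lazy kernel preserves monotonicity. -/
lemma monoE_L {N : ℕ} (hN : 0 < N) {w : Fin (N + 1) → ℝ} (hw : MonoE N w) :
    MonoE N (Lmat N *ᵥ w) := by
  intro m hm
  have hmlt : m < N + 1 := by omega
  have hm1lt : m + 1 < N + 1 := by omega
  rw [ext_lt _ hmlt, ext_lt _ hm1lt, mulVec_Lmat w m hmlt, mulVec_Lmat w (m + 1) hm1lt,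
    Nat.add_sub_cancel]
  push_cast
  refine monoKey' (by exact_mod_cast hm) ?_ (by positivity) (sub_nonneg.mpr (hw m hm)) ?_
  · rcases Nat.eq_zero_or_pos m with rfl | hmpos
    · norm_num
    · have h' := hw (m - 1) (by omega)
      rw [show m - 1 + 1 = m by omega] at h'
      exact mul_nonneg (by positivity) (sub_nonneg.mpr h')
  · rcases eq_or_lt_of_le hm with he | hlt
    · have hNe : (N : ℝ) = (m : ℝ) + 1 := by exact_mod_cast he.symm
      rw [hNe]; simp
    · have h' := hw (m + 1) (by omega)
      exact mul_nonneg (by positivity) (sub_nonneg.mpr h')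

/-- The lazy kernel preserves convexity. -/
lemma convE_L {N : ℕ} (hN : 0 < N) {w : Fin (N + 1) → ℝ} (hw : ConvE N w) :
    ConvE N (Lmat N *ᵥ w) := by
  intro m hm
  have hmlt : m < N + 1 := by omega
  have hm1lt : m + 1 < N + 1 := by omega
  have hm2lt : m + 2 < N + 1 := by omega
  rw [ext_lt _ hm1lt, ext_lt _ hmlt, ext_lt _ hm2lt, mulVec_Lmat w m hmlt,
    mulVec_Lmat w (m + 1) hm1lt, mulVec_Lmat w (m + 2) hm2lt,
    Nat.add_sub_cancel, show m + 2 - 1 = m + 1 by omega]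
  push_cast
  refine convKey' (by exact_mod_cast hm) ?_ (by positivity) ?_ ?_
  · rcases Nat.eq_zero_or_pos m with rfl | hmpos
    · norm_num
    · have h' := hw (m - 1) (by omega)
      rw [show m - 1 + 1 = m by omega, show m - 1 + 2 = m + 1 by omega] at h'
      exact mul_nonneg (by positivity) (by linarith)
  · have h' := hw m hm
    linarith
  · rcases eq_or_lt_of_le hm with he | hlt
    · have hNe : (N : ℝ) = (m : ℝ) + 2 := by exact_mod_cast he.symm
      rw [hNe]; simp
    · have h' := hw (m + 1) (by omega)
      rw [show m + 1 + 1 = m + 2 by omega, show m + 1 + 2 = m + 3 by omega] at h'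
      exact mul_nonneg (by positivity) (by linarith)


/-- Apply a linear functional to a matrix exponential, as a series. -/
lemma linmap_exp_eq {N : ℕ} (φ : Matrix (Fin (N + 1)) (Fin (N + 1)) ℝ →ₗ[ℝ] ℝ)
    (A : Matrix (Fin (N + 1)) (Fin (N + 1)) ℝ) :
    φ (NormedSpace.exp A) = ∑' k : ℕ, ((k.factorial : ℝ)⁻¹) * φ (A ^ k) := by
  letI : SeminormedRing (Matrix (Fin (N + 1)) (Fin (N + 1)) ℝ) := Matrix.linftyOpSemiNormedRing
  letI : NormedRing (Matrix (Fin (N + 1)) (Fin (N + 1)) ℝ) := Matrix.linftyOpNormedRing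
  letI : NormedAlgebra ℝ (Matrix (Fin (N + 1)) (Fin (N + 1)) ℝ) := Matrix.linftyOpNormedAlgebra
  have hsum : Summable (fun k : ℕ => ((k.factorial : ℝ)⁻¹) • A ^ k) :=
    NormedSpace.expSeries_summable' (𝕂 := ℝ) A
  have h1 : NormedSpace.exp A = ∑' k : ℕ, ((k.factorial : ℝ)⁻¹) • A ^ k := by
    rw [NormedSpace.exp_eq_tsum ℝ]
  calc φ (NormedSpace.exp A) = φ (∑' k : ℕ, ((k.factorial : ℝ)⁻¹) • A ^ k) := by rw [h1]
    _ = (LinearMap.toContinuousLinearMap φ) (∑' k : ℕ, ((k.factorial : ℝ)⁻¹) • A ^ k) := rfl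
    _ = ∑' k : ℕ, (LinearMap.toContinuousLinearMap φ) (((k.factorial : ℝ)⁻¹) • A ^ k) :=
        ContinuousLinearMap.map_tsum _ hsum
    _ = ∑' k : ℕ, ((k.factorial : ℝ)⁻¹) * φ (A ^ k) := by
        simp [_root_.map_smul, smul_eq_mul]

/-- exp of a scalar matrix. -/
lemma exp_smul_one {N : ℕ} (c : ℝ) :
    NormedSpace.exp (c • (1 : Matrix (Fin (N + 1)) (Fin (N + 1)) ℝ))
      = Real.exp c • (1 : Matrix (Fin (N + 1)) (Fin (N + 1)) ℝ) := by
  letI : SeminormedRing (Matrix (Fin (N + 1)) (Fin (N + 1)) ℝ) := Matrix.linftyOpSemiNormedRing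
  letI : NormedRing (Matrix (Fin (N + 1)) (Fin (N + 1)) ℝ) := Matrix.linftyOpNormedRing
  letI : NormedAlgebra ℝ (Matrix (Fin (N + 1)) (Fin (N + 1)) ℝ) := Matrix.linftyOpNormedAlgebra
  have h1 : Real.exp c = NormedSpace.exp c := by rw [Real.exp_eq_exp_ℝ]
  rw [← Algebra.algebraMap_eq_smul_one, h1, ← Algebra.algebraMap_eq_smul_one]
  exact (NormedSpace.algebraMap_exp_comm c).symm

/-- Decomposition of the semigroup via the lazy kernel. -/
lemma exp_split {N : ℕ} (t : ℝ) :
    NormedSpace.exp (t • (BLKernel N - 1))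
      = Real.exp (-(2 * t)) • NormedSpace.exp ((2 * t) • Lmat N) := by
  have hA : t • (BLKernel N - 1)
      = (-(2 * t)) • (1 : Matrix (Fin (N + 1)) (Fin (N + 1)) ℝ) + (2 * t) • Lmat N := by
    unfold Lmat; module
  have hcomm : Commute ((-(2 * t)) • (1 : Matrix (Fin (N + 1)) (Fin (N + 1)) ℝ))
      ((2 * t) • Lmat N) := ((Commute.one_left (Lmat N)).smul_left _).smul_right _
  rw [hA, Matrix.exp_add_of_commute _ _ hcomm, exp_smul_one, smul_mul_assoc, one_mul]


/-- Last-column extraction as a linear map. -/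
def colLM (N : ℕ) : Matrix (Fin (N + 1)) (Fin (N + 1)) ℝ →ₗ[ℝ] (Fin (N + 1) → ℝ) where
  toFun M := fun y => M y (Fin.last N)
  map_add' _ _ := rfl
  map_smul' _ _ := rfl

/-- Nonnegativity of functionals of the last column of the semigroup. -/
lemma exp_col_nonneg {N : ℕ} (t : ℝ) (ht : 0 ≤ t) (ψ : (Fin (N + 1) → ℝ) →ₗ[ℝ] ℝ)
    (hψ : ∀ k : ℕ, 0 ≤ ψ (fun y => (Lmat N ^ k) y (Fin.last N))) :
    0 ≤ ψ (fun y => (NormedSpace.exp (t • (BLKernel N - 1))) y (Fin.last N)) := by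
  have key : (fun y => (NormedSpace.exp (t • (BLKernel N - 1))) y (Fin.last N))
      = Real.exp (-(2 * t)) •
        (fun y => (NormedSpace.exp ((2 * t) • Lmat N)) y (Fin.last N)) := by
    funext y
    rw [exp_split]
    simp
  rw [key, _root_.map_smul]
  rw [smul_eq_mul]
  refine mul_nonneg (le_of_lt (Real.exp_pos _)) ?_
  have h2 := linmap_exp_eq (ψ ∘ₗ colLM N) ((2 * t) • Lmat N)
  have h3 : ∀ k : ℕ, (ψ ∘ₗ colLM N) (((2 * t) • Lmat N) ^ k)
      = (2 * t) ^ k * ψ (fun y => (Lmat N ^ k) y (Fin.last N)) := by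
    intro k
    rw [smul_pow]
    have : colLM N ((2 * t) ^ k • Lmat N ^ k) = (2 * t) ^ k • colLM N (Lmat N ^ k) :=
      map_smul _ _ _
    rw [LinearMap.comp_apply, this, _root_.map_smul, smul_eq_mul]
    rfl
  have h4 : 0 ≤ (ψ ∘ₗ colLM N) (NormedSpace.exp ((2 * t) • Lmat N)) := by
    rw [h2]
    refine tsum_nonneg fun k => ?_
    rw [h3 k]
    exact mul_nonneg (by positivity) (mul_nonneg (by positivity) (hψ k))
  exact h4

/-- The last column of powers of the lazy kernel is monotone. -/
lemma monoE_pow {N : ℕ} (hN : 0 < N) (k : ℕ) :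
    MonoE N (fun y => (Lmat N ^ k) y (Fin.last N)) := by
  induction k with
  | zero =>
      intro m hm
      have hmlt : m < N + 1 := by omega
      have hm1lt : m + 1 < N + 1 := by omega
      rw [ext_lt _ hmlt, ext_lt _ hm1lt]
      simp only [pow_zero, Matrix.one_apply]
      have h1 : ¬ ((⟨m, hmlt⟩ : Fin (N + 1)) = Fin.last N) := by
        intro h
        have := congrArg Fin.val h
        simp [Fin.last] at this
        omega
      rw [if_neg h1]
      split_ifs <;> norm_num
  | succ k ih =>
      have hcol : (fun y => (Lmat N ^ (k + 1)) y (Fin.last N))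
          = Lmat N *ᵥ (fun y => (Lmat N ^ k) y (Fin.last N)) := by
        funext y
        rw [pow_succ']
        simp [Matrix.mul_apply, Matrix.mulVec, dotProduct]
      rw [hcol]
      exact monoE_L hN ih

/-- The last column of powers of the lazy kernel is convex. -/
lemma convE_pow {N : ℕ} (hN : 0 < N) (k : ℕ) :
    ConvE N (fun y => (Lmat N ^ k) y (Fin.last N)) := by
  induction k with
  | zero =>
      intro m hm
      have hmlt : m < N + 1 := by omega
      have hm1lt : m + 1 < N + 1 := by omega
      have hm2lt : m + 2 < N + 1 := by omega
      rw [ext_lt _ hmlt, ext_lt _ hm1lt, ext_lt _ hm2lt]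
      simp only [pow_zero, Matrix.one_apply]
      have h1 : ¬ ((⟨m + 1, hm1lt⟩ : Fin (N + 1)) = Fin.last N) := by
        intro h
        have := congrArg Fin.val h
        simp [Fin.last] at this
        omega
      rw [if_neg h1]
      split_ifs <;> norm_num
  | succ k ih =>
      have hcol : (fun y => (Lmat N ^ (k + 1)) y (Fin.last N))
          = Lmat N *ᵥ (fun y => (Lmat N ^ k) y (Fin.last N)) := by
        funext y
        rw [pow_succ']
        simp [Matrix.mul_apply, Matrix.mulVec, dotProduct]
      rw [hcol]
      exact convE_L hN ih

/-- Entries of the Bernoulli–Laplace kernel are nonnegative. -/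
lemma BLKernel_nonneg {N : ℕ} (x y : Fin (N + 1)) : 0 ≤ BLKernel N x y := by
  have hx : ((x : ℕ) : ℝ) ≤ (N : ℝ) := by
    exact_mod_cast Nat.lt_succ_iff.mp x.isLt
  unfold BLKernel
  split_ifs
  · positivity
  · positivity
  · apply div_nonneg _ (by positivity)
    have : (0 : ℝ) ≤ ((N : ℝ) - (x : ℕ)) := by linarith
    positivity
  · exact le_refl 0

/-- Entries of powers of the lazy kernel are nonnegative. -/
lemma Lpow_nonneg {N : ℕ} (k : ℕ) (x y : Fin (N + 1)) : 0 ≤ (Lmat N ^ k) x y := by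
  induction k generalizing x y with
  | zero =>
      simp only [pow_zero, Matrix.one_apply]
      split_ifs <;> norm_num
  | succ k ih =>
      rw [pow_succ']
      rw [Matrix.mul_apply]
      refine Finset.sum_nonneg fun z _ => mul_nonneg ?_ (ih z y)
      unfold Lmat
      simp only [Matrix.smul_apply, Matrix.add_apply, Matrix.one_apply, smul_eq_mul]
      have := BLKernel_nonneg x z
      split_ifs <;> nlinarith

/-- The last column of the semigroup is monotone (for `t ≥ 0`). -/
lemma col_monoE {N : ℕ} (hN : 0 < N) {t : ℝ} (ht : 0 ≤ t) :
    MonoE N (fun y => (NormedSpace.exp (t • (BLKernel N - 1))) y (Fin.last N)) := by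
  intro m hm
  have hmlt : m < N + 1 := by omega
  have hm1lt : m + 1 < N + 1 := by omega
  rw [ext_lt _ hmlt, ext_lt _ hm1lt]
  have h := exp_col_nonneg t ht
    (LinearMap.proj (⟨m + 1, hm1lt⟩ : Fin (N + 1)) - LinearMap.proj ⟨m, hmlt⟩) ?_
  · simpa [sub_nonneg] using h
  · intro k
    have hk := monoE_pow hN k m hm
    rw [ext_lt _ hmlt, ext_lt _ hm1lt] at hk
    simpa [sub_nonneg] using hk

/-- The last column of the semigroup is convex (for `t ≥ 0`). -/
lemma col_convE {N : ℕ} (hN : 0 < N) {t : ℝ} (ht : 0 ≤ t) :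
    ConvE N (fun y => (NormedSpace.exp (t • (BLKernel N - 1))) y (Fin.last N)) := by
  intro m hm
  have hmlt : m < N + 1 := by omega
  have hm1lt : m + 1 < N + 1 := by omega
  have hm2lt : m + 2 < N + 1 := by omega
  rw [ext_lt _ hmlt, ext_lt _ hm1lt, ext_lt _ hm2lt]
  have h := exp_col_nonneg t ht
    (LinearMap.proj (⟨m, hmlt⟩ : Fin (N + 1)) + LinearMap.proj ⟨m + 2, hm2lt⟩
      - (2 : ℝ) • LinearMap.proj ⟨m + 1, hm1lt⟩) ?_
  · simp only [LinearMap.sub_apply, LinearMap.add_apply, LinearMap.smul_apply,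
      LinearMap.proj_apply, smul_eq_mul] at h
    linarith
  · intro k
    have hk := convE_pow hN k m hm
    rw [ext_lt _ hmlt, ext_lt _ hm1lt, ext_lt _ hm2lt] at hk
    simp only [LinearMap.sub_apply, LinearMap.add_apply, LinearMap.smul_apply,
      LinearMap.proj_apply, smul_eq_mul]
    linarith

/-- Entries of the last column of the semigroup are nonnegative (for `t ≥ 0`). -/
lemma col_nonneg {N : ℕ} {t : ℝ} (ht : 0 ≤ t) (y : Fin (N + 1)) :
    0 ≤ (NormedSpace.exp (t • (BLKernel N - 1))) y (Fin.last N) := by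
  have h := exp_col_nonneg t ht (LinearMap.proj y) ?_
  · simpa using h
  · intro k
    simpa using Lpow_nonneg k y (Fin.last N)


/-- Entry extraction as a linear map. -/
def entryLM (N : ℕ) (x y : Fin (N + 1)) : Matrix (Fin (N + 1)) (Fin (N + 1)) ℝ →ₗ[ℝ] ℝ where
  toFun M := M x y
  map_add' _ _ := rfl
  map_smul' _ _ := rfl

/-- Row-sum as a linear map. -/
def rowLM (N : ℕ) (x : Fin (N + 1)) : Matrix (Fin (N + 1)) (Fin (N + 1)) ℝ →ₗ[ℝ] ℝ where
  toFun M := ∑ y : Fin (N + 1), M x y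
  map_add' A B := by simp [Finset.sum_add_distrib]
  map_smul' c A := by simp [Finset.mul_sum]

lemma choose_pos_real {N : ℕ} (y : Fin (N + 1)) : 0 < (N.choose y : ℝ) := by
  exact_mod_cast Nat.choose_pos (Nat.lt_succ_iff.mp y.isLt)

lemma choose2N_pos_real (N : ℕ) : 0 < ((2 * N).choose N : ℝ) := by
  exact_mod_cast Nat.choose_pos (by omega)

/-- The stationary distribution is positive. -/
lemma BLpi_pos {N : ℕ} (y : Fin (N + 1)) : 0 < BLpi N y := by
  unfold BLpi
  exact div_pos (pow_pos (choose_pos_real y) 2) (choose2N_pos_real N)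

/-- Detailed balance for the kernel, one-step version. -/
lemma revP_aux {N : ℕ} (x y : Fin (N + 1)) (h : (y : ℕ) + 1 = (x : ℕ)) :
    BLpi N x * BLKernel N x y = BLpi N y * BLKernel N y x := by
  have hxy : ¬ ((x : ℕ) + 1 = (y : ℕ)) := by omega
  have hyx : (x : ℕ) = (y : ℕ) + 1 := h.symm
  have hKxy : BLKernel N x y = ((x : ℝ) / N) ^ 2 := by
    unfold BLKernel; rw [if_pos h]
  have hKyx : BLKernel N y x = (((N : ℝ) - (y : ℕ)) / N) ^ 2 := by
    unfold BLKernel; rw [if_neg hxy, if_pos hyx]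
  have hyN : (y : ℕ) ≤ N := Nat.lt_succ_iff.mp y.isLt
  have hylt : (y : ℕ) < N := by omega
  have key : (N.choose (x : ℕ) : ℝ) * ((x : ℕ) : ℝ)
      = (N.choose (y : ℕ) : ℝ) * ((N : ℝ) - (y : ℕ)) := by
    have h1 := Nat.choose_succ_right_eq N (y : ℕ)
    have h2 : ((N - (y : ℕ) : ℕ) : ℝ) = (N : ℝ) - ((y : ℕ) : ℝ) :=
      Nat.cast_sub hyN
    rw [← h]
    push_cast [← h2]
    exact_mod_cast congrArg (Nat.cast (R := ℝ)) h1
  have hsq : ((N.choose (x : ℕ) : ℝ) * ((x : ℕ) : ℝ)) ^ 2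
      = ((N.choose (y : ℕ) : ℝ) * ((N : ℝ) - (y : ℕ))) ^ 2 := by rw [key]
  rw [hKxy, hKyx]
  unfold BLpi
  have e1 : (N.choose (x : ℕ) : ℝ) ^ 2 / ((2 * N).choose N : ℝ) * (((x : ℕ) : ℝ) / N) ^ 2
      = ((N.choose (x : ℕ) : ℝ) * ((x : ℕ) : ℝ)) ^ 2 / (((2 * N).choose N : ℝ) * (N : ℝ) ^ 2) := by
    ring
  have e2 : (N.choose (y : ℕ) : ℝ) ^ 2 / ((2 * N).choose N : ℝ) * ((((N : ℝ) - (y : ℕ))) / N) ^ 2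
      = ((N.choose (y : ℕ) : ℝ) * ((N : ℝ) - (y : ℕ))) ^ 2
        / (((2 * N).choose N : ℝ) * (N : ℝ) ^ 2) := by
    ring
  rw [e1, e2, hsq]

/-- Detailed balance for the kernel. -/
lemma revP {N : ℕ} (x y : Fin (N + 1)) :
    BLpi N x * BLKernel N x y = BLpi N y * BLKernel N y x := by
  by_cases h1 : (y : ℕ) + 1 = (x : ℕ)
  · exact revP_aux x y h1
  · by_cases h2 : (x : ℕ) + 1 = (y : ℕ)
    · exact (revP_aux y x h2).symm
    · by_cases h3 : y = x
      · rw [h3]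
      · have h4 : ¬ ((y : ℕ) = (x : ℕ) + 1) := by omega
        have h5 : ¬ ((x : ℕ) = (y : ℕ) + 1) := by omega
        have h6 : ¬ (x = y) := fun hh => h3 hh.symm
        have hKxy : BLKernel N x y = 0 := by
          unfold BLKernel; rw [if_neg h1, if_neg h4, if_neg h3]
        have hKyx : BLKernel N y x = 0 := by
          unfold BLKernel; rw [if_neg h2, if_neg h5, if_neg h6]
        rw [hKxy, hKyx, mul_zero, mul_zero]

/-- Detailed balance for the generator. -/
lemma revA {N : ℕ} (t : ℝ) (x y : Fin (N + 1)) :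
    BLpi N x * (t • (BLKernel N - 1)) x y = BLpi N y * (t • (BLKernel N - 1)) y x := by
  have h1 : BLpi N x * (1 : Matrix (Fin (N + 1)) (Fin (N + 1)) ℝ) x y
      = BLpi N y * (1 : Matrix (Fin (N + 1)) (Fin (N + 1)) ℝ) y x := by
    by_cases h : x = y
    · rw [h]
    · rw [Matrix.one_apply_ne h, Matrix.one_apply_ne (fun hh => h hh.symm), mul_zero, mul_zero]
  simp only [Matrix.smul_apply, Matrix.sub_apply, smul_eq_mul]
  have := revP x y
  linear_combination t * this - t * h1

/-- Detailed balance for powers of the generator. -/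
lemma rev_pow {N : ℕ} (t : ℝ) (k : ℕ) (x y : Fin (N + 1)) :
    BLpi N x * ((t • (BLKernel N - 1)) ^ k) x y
      = BLpi N y * ((t • (BLKernel N - 1)) ^ k) y x := by
  induction k generalizing x y with
  | zero =>
      simp only [pow_zero]
      by_cases h : x = y
      · rw [h]
      · rw [Matrix.one_apply_ne h, Matrix.one_apply_ne (fun hh => h hh.symm), mul_zero, mul_zero]
  | succ k ih =>
      set A := t • (BLKernel N - 1) with hA
      have h1 : A ^ (k + 1) = A * A ^ k := pow_succ' A k
      have h2 : A ^ (k + 1) = A ^ k * A := pow_succ A k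
      rw [h1, Matrix.mul_apply, Finset.mul_sum]
      have step : ∀ z ∈ Finset.univ (α := Fin (N + 1)),
          BLpi N x * (A x z * (A ^ k) z y)
          = BLpi N y * ((A ^ k) y z * A z x) := by
        intro z _
        have e1 : BLpi N x * A x z = BLpi N z * A z x := revA t x z
        have e2 : BLpi N z * (A ^ k) z y = BLpi N y * (A ^ k) y z := ih z y
        linear_combination (A ^ k) z y * e1 + A z x * e2
      rw [Finset.sum_congr rfl step, ← Finset.mul_sum]
      have : ∑ z : Fin (N + 1), (A ^ k) y z * A z x = (A ^ k * A) y x := by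
        rw [Matrix.mul_apply]
      rw [this, ← h2, h1]

/-- Detailed balance for the semigroup. -/
lemma rev_exp {N : ℕ} (t : ℝ) (x y : Fin (N + 1)) :
    BLpi N x * (NormedSpace.exp (t • (BLKernel N - 1))) x y
      = BLpi N y * (NormedSpace.exp (t • (BLKernel N - 1))) y x := by
  have h := linmap_exp_eq (BLpi N x • entryLM N x y - BLpi N y • entryLM N y x)
    (t • (BLKernel N - 1))
  have hz : ∀ k : ℕ, (BLpi N x • entryLM N x y - BLpi N y • entryLM N y x)
      ((t • (BLKernel N - 1)) ^ k) = 0 := by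
    intro k
    simp only [LinearMap.sub_apply, LinearMap.smul_apply, smul_eq_mul, entryLM,
      LinearMap.coe_mk, AddHom.coe_mk]
    show BLpi N x * ((t • (BLKernel N - 1)) ^ k) x y
      - BLpi N y * ((t • (BLKernel N - 1)) ^ k) y x = 0
    rw [rev_pow t k x y]
    ring
  have h0 : (BLpi N x • entryLM N x y - BLpi N y • entryLM N y x)
      (NormedSpace.exp (t • (BLKernel N - 1))) = 0 := by
    rw [h]
    simp [hz]
  simp only [LinearMap.sub_apply, LinearMap.smul_apply, smul_eq_mul, entryLM,
    LinearMap.coe_mk, AddHom.coe_mk] at h0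
  change BLpi N x * (NormedSpace.exp (t • (BLKernel N - 1))) x y
    - BLpi N y * (NormedSpace.exp (t • (BLKernel N - 1))) y x = 0 at h0
  linarith

/-- Rows of the kernel sum to one. -/
lemma rowsum_P {N : ℕ} (hN : 0 < N) (z : Fin (N + 1)) :
    ∑ y : Fin (N + 1), BLKernel N z y = 1 := by
  obtain ⟨m, hm⟩ := z
  have h1 : ∑ y : Fin (N + 1), BLKernel N ⟨m, hm⟩ y
      = (BLKernel N *ᵥ (fun _ => (1 : ℝ))) ⟨m, hm⟩ := by
    rw [Matrix.mulVec, dotProduct]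
    simp
  rw [h1, mulVec_BLKernel (fun _ => (1 : ℝ)) m hm]
  have hNR : (N : ℝ) ≠ 0 := Nat.cast_ne_zero.mpr hN.ne'
  have hext1 : ext N (fun _ => (1 : ℝ)) (m - 1) = 1 := ext_lt _ (by omega)
  have hext2 : ext N (fun _ => (1 : ℝ)) m = 1 := ext_lt _ hm
  rw [hext1, hext2]
  rcases Nat.lt_or_ge m N with hlt | hge
  · have hext3 : ext N (fun _ => (1 : ℝ)) (m + 1) = 1 := ext_lt _ (by omega)
    rw [hext3]
    field_simp
    ring
  · have hmN : m = N := by omega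
    have hext3 : ext N (fun _ => (1 : ℝ)) (m + 1) = 0 := ext_ge _ (by omega)
    have hmR : (m : ℝ) = (N : ℝ) := by exact_mod_cast hmN
    rw [hext3, hmR]
    field_simp
    ring

/-- Rows of the semigroup sum to one (`t` arbitrary). -/
lemma rowsum_exp {N : ℕ} (hN : 0 < N) (t : ℝ) (x : Fin (N + 1)) :
    ∑ y : Fin (N + 1), (NormedSpace.exp (t • (BLKernel N - 1))) x y = 1 := by
  have h := linmap_exp_eq (rowLM N x) (t • (BLKernel N - 1))
  have hrowA : ∀ z : Fin (N + 1), ∑ y : Fin (N + 1), (t • (BLKernel N - 1)) z y = 0 := by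
    intro z
    simp only [Matrix.smul_apply, Matrix.sub_apply, smul_eq_mul]
    rw [← Finset.mul_sum]
    have : ∑ y : Fin (N + 1), (BLKernel N z y - (1 : Matrix (Fin (N+1)) (Fin (N+1)) ℝ) z y)
        = 0 := by
      rw [Finset.sum_sub_distrib, rowsum_P hN z]
      simp [Matrix.one_apply]
    rw [this, mul_zero]
  have hz : ∀ k : ℕ, k ≠ 0 → (rowLM N x) ((t • (BLKernel N - 1)) ^ k) = 0 := by
    intro k hk
    obtain ⟨j, rfl⟩ := Nat.exists_eq_succ_of_ne_zero hk
    simp only [rowLM, LinearMap.coe_mk, AddHom.coe_mk]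
    rw [pow_succ]
    have : ∀ y : Fin (N + 1), ((t • (BLKernel N - 1)) ^ j * (t • (BLKernel N - 1))) x y
        = ∑ z : Fin (N + 1), ((t • (BLKernel N - 1)) ^ j) x z * (t • (BLKernel N - 1)) z y :=
      fun y => Matrix.mul_apply
    rw [Finset.sum_congr rfl (fun y _ => this y), Finset.sum_comm]
    rw [Finset.sum_eq_zero]
    intro z _
    rw [← Finset.mul_sum, hrowA z, mul_zero]
  have h0 : (rowLM N x) (NormedSpace.exp (t • (BLKernel N - 1))) = 1 := by
    rw [h, tsum_eq_single 0]
    · simp only [rowLM, LinearMap.coe_mk, AddHom.coe_mk, pow_zero]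
      simp [Matrix.one_apply, Nat.factorial]
    · intro k hk
      rw [hz k hk, mul_zero]
  simpa [rowLM] using h0

/-- Vandermonde: the stationary distribution sums to one. -/
lemma BLpi_sum {N : ℕ} : ∑ y : Fin (N + 1), BLpi N y = 1 := by
  have key : ∑ i ∈ Finset.range (N + 1), (N.choose i) ^ 2 = (2 * N).choose N := by
    rw [two_mul, Nat.add_choose_eq, Finset.Nat.sum_antidiagonal_eq_sum_range_succ_mk]
    refine Finset.sum_congr rfl fun k hk => ?_
    have hkN : k ≤ N := Nat.lt_succ_iff.mp (Finset.mem_range.mp hk)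
    rw [Nat.choose_symm hkN]
    ring
  unfold BLpi
  rw [Fin.sum_univ_eq_sum_range (fun i => ((N.choose i : ℝ)) ^ 2 / ((2 * N).choose N : ℝ))
    (N + 1), ← Finset.sum_div]
  rw [show ∑ i ∈ Finset.range (N + 1), ((N.choose i : ℝ)) ^ 2
      = (((2 * N).choose N : ℕ) : ℝ) by exact_mod_cast congrArg (Nat.cast (R := ℝ)) key]
  exact div_self (choose2N_pos_real N).ne'

/-- The mean of the stationary distribution is `N/2`. -/
lemma BLpi_mean {N : ℕ} : ∑ y : Fin (N + 1), BLpi N y * ((y : ℕ) : ℝ) = (N : ℝ) / 2 := by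
  have reflect : ∑ i ∈ Finset.range (N + 1), (N.choose i : ℝ) ^ 2 * ((N : ℝ) - i)
      = ∑ i ∈ Finset.range (N + 1), (N.choose i : ℝ) ^ 2 * (i : ℝ) := by
    rw [← Finset.sum_range_reflect (fun i => (N.choose i : ℝ) ^ 2 * (i : ℝ)) (N + 1)]
    refine Finset.sum_congr rfl fun j hj => ?_
    have hjN : j ≤ N := Nat.lt_succ_iff.mp (Finset.mem_range.mp hj)
    have h1 : N + 1 - 1 - j = N - j := by omega
    rw [h1, Nat.choose_symm hjN, Nat.cast_sub hjN]
  have key : ∑ i ∈ Finset.range (N + 1), (N.choose i : ℝ) ^ 2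
      = (((2 * N).choose N : ℕ) : ℝ) := by
    have key' : ∑ i ∈ Finset.range (N + 1), (N.choose i) ^ 2 = (2 * N).choose N := by
      rw [two_mul, Nat.add_choose_eq, Finset.Nat.sum_antidiagonal_eq_sum_range_succ_mk]
      refine Finset.sum_congr rfl fun k hk => ?_
      have hkN : k ≤ N := Nat.lt_succ_iff.mp (Finset.mem_range.mp hk)
      rw [Nat.choose_symm hkN]
      ring
    exact_mod_cast congrArg (Nat.cast (R := ℝ)) key'
  have h2 : (2 : ℝ) * ∑ i ∈ Finset.range (N + 1), (N.choose i : ℝ) ^ 2 * (i : ℝ)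
      = (N : ℝ) * (((2 * N).choose N : ℕ) : ℝ) := by
    have expand : ∑ i ∈ Finset.range (N + 1), (N.choose i : ℝ) ^ 2 * (i : ℝ)
          + ∑ i ∈ Finset.range (N + 1), (N.choose i : ℝ) ^ 2 * ((N : ℝ) - i)
        = (N : ℝ) * ∑ i ∈ Finset.range (N + 1), (N.choose i : ℝ) ^ 2 := by
      rw [← Finset.sum_add_distrib, Finset.mul_sum]
      refine Finset.sum_congr rfl fun i _ => ?_
      ring
    rw [reflect] at expand
    rw [key] at expand
    linarith
  unfold BLpi
  rw [Fin.sum_univ_eq_sum_range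
    (fun i => ((N.choose i : ℝ)) ^ 2 / ((2 * N).choose N : ℝ) * (i : ℝ)) (N + 1)]
  have hC : (((2 * N).choose N : ℕ) : ℝ) ≠ 0 := (choose2N_pos_real N).ne'
  have hsumdiv : ∑ i ∈ Finset.range (N + 1),
      ((N.choose i : ℝ)) ^ 2 / ((2 * N).choose N : ℝ) * (i : ℝ)
      = (∑ i ∈ Finset.range (N + 1), (N.choose i : ℝ) ^ 2 * (i : ℝ))
        / ((2 * N).choose N : ℝ) := by
    rw [Finset.sum_div]
    exact Finset.sum_congr rfl fun i _ => by ring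
  rw [hsumdiv, div_eq_div_iff hC (by norm_num : (2:ℝ) ≠ 0)]
  linarith [h2]


/-- The likelihood ratio vector. -/
noncomputable def vvf (N : ℕ) (t : ℝ) : Fin (N + 1) → ℝ :=
  fun y => (NormedSpace.exp (t • (BLKernel N - 1))) (Fin.last N) y / BLpi N y

lemma vvf_eq_col {N : ℕ} (t : ℝ) (y : Fin (N + 1)) :
    vvf N t y = (1 / BLpi N (Fin.last N))
      * (NormedSpace.exp (t • (BLKernel N - 1))) y (Fin.last N) := by
  have h := rev_exp t (Fin.last N) y
  have h1 : BLpi N y ≠ 0 := (BLpi_pos y).ne'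
  have h2 : BLpi N (Fin.last N) ≠ 0 := (BLpi_pos _).ne'
  unfold vvf
  field_simp
  linarith [h]

lemma ext_scale {N : ℕ} (c : ℝ) (w : Fin (N + 1) → ℝ) (i : ℕ) :
    ext N (fun y => c * w y) i = c * ext N w i := by
  unfold ext
  split
  · rfl
  · rw [mul_zero]

lemma monoE_vvf {N : ℕ} (hN : 0 < N) {t : ℝ} (ht : 0 ≤ t) : MonoE N (vvf N t) := by
  have hcol := col_monoE hN ht
  have hc : 0 ≤ 1 / BLpi N (Fin.last N) := le_of_lt (div_pos one_pos (BLpi_pos _))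
  intro m hm
  have hvv : (vvf N t) = fun y => (1 / BLpi N (Fin.last N))
      * (NormedSpace.exp (t • (BLKernel N - 1))) y (Fin.last N) :=
    funext fun y => vvf_eq_col t y
  rw [hvv, ext_scale, ext_scale]
  exact mul_le_mul_of_nonneg_left (hcol m hm) hc

lemma convE_vvf {N : ℕ} (hN : 0 < N) {t : ℝ} (ht : 0 ≤ t) : ConvE N (vvf N t) := by
  have hcol := col_convE hN ht
  have hc : 0 ≤ 1 / BLpi N (Fin.last N) := le_of_lt (div_pos one_pos (BLpi_pos _))
  intro m hm
  have hvv : (vvf N t) = fun y => (1 / BLpi N (Fin.last N))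
      * (NormedSpace.exp (t • (BLKernel N - 1))) y (Fin.last N) :=
    funext fun y => vvf_eq_col t y
  rw [hvv, ext_scale, ext_scale, ext_scale]
  have := hcol m hm
  nlinarith [mul_le_mul_of_nonneg_left this hc]

lemma monoE_le {N : ℕ} {w : Fin (N + 1) → ℝ} (hw : MonoE N w) :
    ∀ (y : Fin (N + 1)), w ⟨0, Nat.succ_pos N⟩ ≤ w y := by
  suffices h : ∀ m, ∀ (hm : m < N + 1), w ⟨0, Nat.succ_pos N⟩ ≤ w ⟨m, hm⟩ by
    intro y
    obtain ⟨m, hm⟩ := y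
    exact h m hm
  intro m
  induction m with
  | zero => intro hm; exact le_refl _
  | succ j ih =>
      intro hm
      have h1 : j < N + 1 := by omega
      have h2 := hw j (by omega)
      rw [ext_lt _ h1, ext_lt _ hm] at h2
      exact le_trans (ih h1) h2

lemma conv_incr {N : ℕ} {w : Fin (N + 1) → ℝ} (hw : ConvE N w) :
    ∀ m, m + 1 ≤ N → ext N w 1 - ext N w 0 ≤ ext N w (m + 1) - ext N w m := by
  intro m
  induction m with
  | zero => intro _; exact le_refl _
  | succ j ih =>
      intro hm
      have h1 := ih (by omega)
      have h2 := hw j (by omega)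
      linarith

lemma conv_linear {N : ℕ} {w : Fin (N + 1) → ℝ} (hw : ConvE N w) :
    ∀ m, m < N + 1 → (m : ℝ) * (ext N w 1 - ext N w 0) ≤ ext N w m - ext N w 0 := by
  intro m
  induction m with
  | zero => intro _; simp
  | succ j ih =>
      intro hm
      have h1 := ih (by omega)
      have h2 := conv_incr hw j (by omega)
      push_cast
      linarith

/-- The separation distance equals the value at state `0`. -/
lemma sep_eq {N : ℕ} (hN : 0 < N) {t : ℝ} (ht : 0 ≤ t) :
    BLsepEndpoint N t = 1 - vvf N t ⟨0, Nat.succ_pos N⟩ := by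
  have hle := monoE_le (monoE_vvf hN ht)
  apply le_antisymm
  · apply ciSup_le
    intro y
    have := hle y
    show 1 - vvf N t y ≤ 1 - vvf N t ⟨0, Nat.succ_pos N⟩
    linarith
  · exact le_ciSup (Set.Finite.bddAbove (Set.finite_range
      (fun y : Fin (N + 1) => 1 - vvf N t y))) ⟨0, Nat.succ_pos N⟩

/-- The stationary average of the likelihood ratio is one. -/
lemma vvf_avg {N : ℕ} (hN : 0 < N) (t : ℝ) :
    ∑ y : Fin (N + 1), BLpi N y * vvf N t y = 1 := by
  have h1 : ∀ y : Fin (N + 1), BLpi N y * vvf N t y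
      = (NormedSpace.exp (t • (BLKernel N - 1))) (Fin.last N) y := by
    intro y
    unfold vvf
    rw [mul_div_assoc']
    exact mul_div_cancel_left₀ _ (BLpi_pos y).ne'
  rw [Finset.sum_congr rfl (fun y _ => h1 y)]
  exact rowsum_exp hN t (Fin.last N)

lemma one_sub_vvf0 {N : ℕ} (hN : 0 < N) (t : ℝ) :
    1 - vvf N t ⟨0, Nat.succ_pos N⟩
      = ∑ y : Fin (N + 1), BLpi N y * (vvf N t y - vvf N t ⟨0, Nat.succ_pos N⟩) := by
  have h1 := vvf_avg hN t
  have h2 : ∑ y : Fin (N + 1), BLpi N y * vvf N t ⟨0, Nat.succ_pos N⟩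
      = vvf N t ⟨0, Nat.succ_pos N⟩ := by
    rw [← Finset.sum_mul, BLpi_sum, one_mul]
  calc 1 - vvf N t ⟨0, Nat.succ_pos N⟩
      = ∑ y : Fin (N + 1), BLpi N y * vvf N t y
        - ∑ y : Fin (N + 1), BLpi N y * vvf N t ⟨0, Nat.succ_pos N⟩ := by rw [h1, h2]
    _ = ∑ y : Fin (N + 1), (BLpi N y * vvf N t y
        - BLpi N y * vvf N t ⟨0, Nat.succ_pos N⟩) := by rw [Finset.sum_sub_distrib]
    _ = ∑ y : Fin (N + 1), BLpi N y * (vvf N t y - vvf N t ⟨0, Nat.succ_pos N⟩) := by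
        exact Finset.sum_congr rfl fun y _ => by ring

lemma vvf0_le_one {N : ℕ} (hN : 0 < N) {t : ℝ} (ht : 0 ≤ t) :
    vvf N t ⟨0, Nat.succ_pos N⟩ ≤ 1 := by
  have h := one_sub_vvf0 hN t
  have hle := monoE_le (monoE_vvf hN ht)
  have hnn : 0 ≤ ∑ y : Fin (N + 1), BLpi N y * (vvf N t y - vvf N t ⟨0, Nat.succ_pos N⟩) :=
    Finset.sum_nonneg fun y _ => mul_nonneg (le_of_lt (BLpi_pos y))
      (sub_nonneg.mpr (hle y))
  linarith

lemma vvf0_nonneg {N : ℕ} (hN : 0 < N) {t : ℝ} (ht : 0 ≤ t) :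
    0 ≤ vvf N t ⟨0, Nat.succ_pos N⟩ := by
  rw [vvf_eq_col]
  exact mul_nonneg (le_of_lt (div_pos one_pos (BLpi_pos _))) (col_nonneg ht _)

/-- The crux inequality: the hazard rate is at most the spectral gap. -/
lemma crux {N : ℕ} (hN : 0 < N) {t : ℝ} (ht : 0 ≤ t) :
    vvf N t ⟨1, by omega⟩ - vvf N t ⟨0, Nat.succ_pos N⟩
      ≤ (2 / (N : ℝ)) * (1 - vvf N t ⟨0, Nat.succ_pos N⟩) := by
  set v0 := vvf N t ⟨0, Nat.succ_pos N⟩ with hv0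
  set v1 := vvf N t ⟨1, by omega⟩ with hv1
  have hconv := convE_vvf hN ht
  have hlin := conv_linear hconv
  have hNR : (0 : ℝ) < (N : ℝ) := by exact_mod_cast hN
  have hext0 : ext N (vvf N t) 0 = v0 := ext_lt _ (Nat.succ_pos N)
  have hext1 : ext N (vvf N t) 1 = v1 := ext_lt _ (by omega)
  have step : ∀ y : Fin (N + 1),
      BLpi N y * (((y : ℕ) : ℝ) * (v1 - v0)) ≤ BLpi N y * (vvf N t y - v0) := by
    intro y
    refine mul_le_mul_of_nonneg_left ?_ (le_of_lt (BLpi_pos y))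
    have := hlin (y : ℕ) y.isLt
    rw [hext0, hext1, ext_fin] at this
    exact this
  have hsum : ∑ y : Fin (N + 1), BLpi N y * (((y : ℕ) : ℝ) * (v1 - v0))
      ≤ ∑ y : Fin (N + 1), BLpi N y * (vvf N t y - v0) :=
    Finset.sum_le_sum fun y _ => step y
  have hmean : ∑ y : Fin (N + 1), BLpi N y * (((y : ℕ) : ℝ) * (v1 - v0))
      = ((N : ℝ) / 2) * (v1 - v0) := by
    have : ∀ y : Fin (N + 1), BLpi N y * (((y : ℕ) : ℝ) * (v1 - v0))
        = (BLpi N y * ((y : ℕ) : ℝ)) * (v1 - v0) := fun y => by ring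
    rw [Finset.sum_congr rfl (fun y _ => this y), ← Finset.sum_mul, BLpi_mean]
  have hfinal : ((N : ℝ) / 2) * (v1 - v0) ≤ 1 - v0 := by
    rw [← one_sub_vvf0 hN t] at hsum
    rw [hmean] at hsum
    exact hsum
  have h2N : (0 : ℝ) < 2 / (N : ℝ) := by positivity
  have h3 : (2 / (N : ℝ)) * (((N : ℝ) / 2) * (v1 - v0)) = v1 - v0 := by
    field_simp
  linarith [mul_le_mul_of_nonneg_left hfinal (le_of_lt h2N), h3]


lemma pi1_eq {N : ℕ} (hN : 0 < N) :
    BLpi N ⟨1, by omega⟩ = (N : ℝ) ^ 2 * BLpi N ⟨0, Nat.succ_pos N⟩ := by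
  unfold BLpi
  have h1 : ((⟨1, by omega⟩ : Fin (N + 1)) : ℕ) = 1 := rfl
  have h0 : ((⟨0, Nat.succ_pos N⟩ : Fin (N + 1)) : ℕ) = 0 := rfl
  rw [h1, h0, Nat.choose_one_right, Nat.choose_zero_right]
  push_cast
  ring

lemma colP0 {N : ℕ} (hN : 0 < N) (z : Fin (N + 1)) :
    BLKernel N z ⟨0, Nat.succ_pos N⟩
      = if z = ⟨1, by omega⟩ then (1 / (N : ℝ)) ^ 2 else 0 := by
  unfold BLKernel
  have h0 : ((⟨0, Nat.succ_pos N⟩ : Fin (N + 1)) : ℕ) = 0 := rfl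
  by_cases h1 : ((⟨0, Nat.succ_pos N⟩ : Fin (N + 1)) : ℕ) + 1 = (z : ℕ)
  · have hz1 : (z : ℕ) = 1 := by omega
    rw [if_pos h1, if_pos (Fin.ext (show (z : ℕ) = ((⟨1, by omega⟩ : Fin (N + 1)) : ℕ) from hz1)
      : z = ⟨1, by omega⟩)]
    rw [hz1]
    norm_num
  · rw [if_neg h1, if_neg (by omega : ¬ ((⟨0, Nat.succ_pos N⟩ : Fin (N + 1)) : ℕ) = (z : ℕ) + 1)]
    have hzne : ¬ (z = ⟨1, by omega⟩) := by
      intro hh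
      apply h1
      rw [hh, h0]
    rw [if_neg hzne]
    by_cases h3 : (⟨0, Nat.succ_pos N⟩ : Fin (N + 1)) = z
    · rw [if_pos h3]
      have hz0 : (z : ℕ) = 0 := by rw [← h3]
      rw [hz0]
      norm_num
    · rw [if_neg h3]

lemma hasDerivAt_entry {N : ℕ} (x y : Fin (N + 1)) (t : ℝ) :
    HasDerivAt (fun u : ℝ => (NormedSpace.exp (u • (BLKernel N - 1))) x y)
      ((NormedSpace.exp (t • (BLKernel N - 1)) * (BLKernel N - 1)) x y) t := by
  letI : SeminormedRing (Matrix (Fin (N + 1)) (Fin (N + 1)) ℝ) := Matrix.linftyOpSemiNormedRing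
  letI : NormedRing (Matrix (Fin (N + 1)) (Fin (N + 1)) ℝ) := Matrix.linftyOpNormedRing
  letI : NormedAlgebra ℝ (Matrix (Fin (N + 1)) (Fin (N + 1)) ℝ) := Matrix.linftyOpNormedAlgebra
  have h := hasDerivAt_exp_smul_const (𝕂 := ℝ) (BLKernel N - 1) t
  have hφ := ((LinearMap.toContinuousLinearMap
    (entryLM N x y)).hasFDerivAt).comp_hasDerivAt t h
  exact hφ

lemma hasDerivAt_F {N : ℕ} (hN : 0 < N) (t : ℝ) :
    HasDerivAt
      (fun u : ℝ =>
        (NormedSpace.exp (u • (BLKernel N - 1))) (Fin.last N) ⟨0, Nat.succ_pos N⟩)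
      ((NormedSpace.exp (t • (BLKernel N - 1))) (Fin.last N) ⟨1, by omega⟩ * (1 / (N : ℝ)) ^ 2
        - (NormedSpace.exp (t • (BLKernel N - 1))) (Fin.last N) ⟨0, Nat.succ_pos N⟩) t := by
  have h := hasDerivAt_entry (N := N) (Fin.last N) ⟨0, Nat.succ_pos N⟩ t
  convert h using 1
  rw [Matrix.mul_apply]
  have step : ∀ z : Fin (N + 1),
      (NormedSpace.exp (t • (BLKernel N - 1))) (Fin.last N) z
        * (BLKernel N - 1) z ⟨0, Nat.succ_pos N⟩
      = (if z = (⟨1, by omega⟩ : Fin (N + 1)) then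
          (NormedSpace.exp (t • (BLKernel N - 1))) (Fin.last N) z * (1 / (N : ℝ)) ^ 2 else 0)
        - (if z = (⟨0, Nat.succ_pos N⟩ : Fin (N + 1)) then
          (NormedSpace.exp (t • (BLKernel N - 1))) (Fin.last N) z else 0) := by
    intro z
    rw [Matrix.sub_apply, colP0 hN z, Matrix.one_apply]
    have hne : ¬ ((⟨1, by omega⟩ : Fin (N + 1)) = (⟨0, Nat.succ_pos N⟩ : Fin (N + 1))) := by
      intro hh
      have := congrArg Fin.val hh
      simp at this
    by_cases hz1 : z = (⟨1, by omega⟩ : Fin (N + 1))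
    · have hz0 : ¬ (z = (⟨0, Nat.succ_pos N⟩ : Fin (N + 1))) := by
        rw [hz1]; exact hne
      rw [if_pos hz1, if_pos hz1, if_neg hz0, if_neg hz0]
      ring
    · rw [if_neg hz1, if_neg hz1]
      by_cases hz0 : z = (⟨0, Nat.succ_pos N⟩ : Fin (N + 1))
      · rw [if_pos hz0, if_pos hz0]
        ring
      · rw [if_neg hz0, if_neg hz0]
        ring
  rw [Finset.sum_congr rfl (fun z _ => step z), Finset.sum_sub_distrib,
    Finset.sum_ite_eq' Finset.univ (⟨1, by omega⟩ : Fin (N + 1))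
      (fun z => (NormedSpace.exp (t • (BLKernel N - 1))) (Fin.last N) z * (1 / (N : ℝ)) ^ 2),
    Finset.sum_ite_eq' Finset.univ (⟨0, Nat.succ_pos N⟩ : Fin (N + 1))
      (fun z => (NormedSpace.exp (t • (BLKernel N - 1))) (Fin.last N) z),
    if_pos (Finset.mem_univ _), if_pos (Finset.mem_univ _)]

/-- The two key monotonicity bounds for the separation distance. -/
lemma sep_bounds {N : ℕ} (hN : 0 < N) {t t' : ℝ} (ht : 0 ≤ t) (htt : t ≤ t') :
    BLsepEndpoint N t' ≤ BLsepEndpoint N t ∧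
      Real.exp ((2 / (N : ℝ)) * (t - t')) * BLsepEndpoint N t ≤ BLsepEndpoint N t' := by
  have hNR : (0 : ℝ) < (N : ℝ) := by exact_mod_cast hN
  have hπ0 : 0 < BLpi N (⟨0, Nat.succ_pos N⟩ : Fin (N + 1)) := BLpi_pos _
  set c : ℝ := 2 / (N : ℝ) with hc
  have hcpos : 0 < c := by positivity
  set σ : ℝ → ℝ := fun u => 1 - (NormedSpace.exp (u • (BLKernel N - 1))) (Fin.last N)
      ⟨0, Nat.succ_pos N⟩ / BLpi N ⟨0, Nat.succ_pos N⟩ with hσ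
  set D : ℝ → ℝ := fun u =>
    (NormedSpace.exp (u • (BLKernel N - 1))) (Fin.last N) ⟨1, by omega⟩ * (1 / (N : ℝ)) ^ 2
      - (NormedSpace.exp (u • (BLKernel N - 1))) (Fin.last N) ⟨0, Nat.succ_pos N⟩ with hD
  have hsep : ∀ u : ℝ, 0 ≤ u → BLsepEndpoint N u = σ u := by
    intro u hu
    rw [sep_eq hN hu]
    rfl
  have hσd : ∀ u : ℝ, HasDerivAt σ (-(D u / BLpi N ⟨0, Nat.succ_pos N⟩)) u := by
    intro u
    exact ((hasDerivAt_F hN u).div_const _).const_sub 1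
  -- identification of D with the likelihood ratios
  have hDvv : ∀ u : ℝ, D u = BLpi N ⟨0, Nat.succ_pos N⟩
      * (vvf N u ⟨1, by omega⟩ - vvf N u ⟨0, Nat.succ_pos N⟩) := by
    intro u
    have hπ1 : BLpi N (⟨1, by omega⟩ : Fin (N + 1)) ≠ 0 := (BLpi_pos _).ne'
    have e1 : (NormedSpace.exp (u • (BLKernel N - 1))) (Fin.last N) ⟨1, by omega⟩
        = BLpi N ⟨1, by omega⟩ * vvf N u ⟨1, by omega⟩ := by
      unfold vvf
      rw [mul_comm, div_mul_cancel₀ _ hπ1]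
    have e0 : (NormedSpace.exp (u • (BLKernel N - 1))) (Fin.last N) ⟨0, Nat.succ_pos N⟩
        = BLpi N ⟨0, Nat.succ_pos N⟩ * vvf N u ⟨0, Nat.succ_pos N⟩ := by
      unfold vvf
      rw [mul_comm, div_mul_cancel₀ _ hπ0.ne']
    rw [hD]
    simp only
    rw [e1, e0, pi1_eq hN]
    field_simp
  have hDpos : ∀ u : ℝ, 0 ≤ u → 0 ≤ D u := by
    intro u hu
    rw [hDvv u]
    refine mul_nonneg hπ0.le (sub_nonneg.mpr ?_)
    have h := monoE_vvf hN hu 0 (by omega)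
    rwa [ext_lt _ (by omega), ext_lt _ (by omega)] at h
  have hcrux : ∀ u : ℝ, 0 ≤ u → D u / BLpi N ⟨0, Nat.succ_pos N⟩ ≤ c * σ u := by
    intro u hu
    rw [hDvv u, mul_comm, mul_div_assoc, div_self hπ0.ne', mul_one]
    have h := crux hN hu
    have hσu : σ u = 1 - vvf N u ⟨0, Nat.succ_pos N⟩ := rfl
    rw [hσu, hc]
    exact h
  -- σ is antitone on [0, ∞)
  have hanti : AntitoneOn σ (Set.Ici (0 : ℝ)) := by
    refine antitoneOn_of_deriv_nonpos (convex_Ici 0)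
      (fun u _ => (hσd u).continuousAt.continuousWithinAt)
      (fun u hu => (hσd u).differentiableAt.differentiableWithinAt) ?_
    intro u hu
    rw [interior_Ici] at hu
    rw [(hσd u).deriv]
    have := hDpos u (le_of_lt hu)
    have : 0 ≤ D u / BLpi N ⟨0, Nat.succ_pos N⟩ := div_nonneg this hπ0.le
    linarith
  -- e^{cu} σ(u) is monotone on [0, ∞)
  have hgd : ∀ u : ℝ, HasDerivAt (fun v => Real.exp (c * v) * σ v)
      (Real.exp (c * u) * c * σ u
        + Real.exp (c * u) * (-(D u / BLpi N ⟨0, Nat.succ_pos N⟩))) u := by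
    intro u
    have h1 : HasDerivAt (fun v : ℝ => Real.exp (c * v)) (Real.exp (c * u) * c) u := by
      have := ((hasDerivAt_id u).const_mul c).exp
      simpa using this
    exact h1.mul (hσd u)
  have hmono : MonotoneOn (fun v => Real.exp (c * v) * σ v) (Set.Ici (0 : ℝ)) := by
    refine monotoneOn_of_deriv_nonneg (convex_Ici 0)
      (fun u _ => (hgd u).continuousAt.continuousWithinAt)
      (fun u hu => (hgd u).differentiableAt.differentiableWithinAt) ?_
    intro u hu
    rw [interior_Ici] at hu
    rw [(hgd u).deriv]
    have h2 := hcrux u (le_of_lt hu)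
    have h3 : 0 < Real.exp (c * u) := Real.exp_pos _
    nlinarith
  have ht' : (0 : ℝ) ≤ t' := le_trans ht htt
  constructor
  · rw [hsep t ht, hsep t' ht']
    exact hanti ht ht' htt
  · rw [hsep t ht, hsep t' ht']
    have h := hmono ht ht' htt
    calc Real.exp (c * (t - t')) * σ t
        = Real.exp (-(c * t')) * (Real.exp (c * t) * σ t) := by
          rw [← mul_assoc, ← Real.exp_add]
          ring_nf
      _ ≤ Real.exp (-(c * t')) * (Real.exp (c * t') * σ t') :=
          mul_le_mul_of_nonneg_left h (Real.exp_pos _).le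
      _ = σ t' := by
          rw [← mul_assoc, ← Real.exp_add]
          simp

lemma sep_nonneg' {N : ℕ} (hN : 0 < N) {t : ℝ} (ht : 0 ≤ t) : 0 ≤ BLsepEndpoint N t := by
  rw [sep_eq hN ht]
  linarith [vvf0_le_one hN ht]

lemma sep_le_one' {N : ℕ} (hN : 0 < N) {t : ℝ} (ht : 0 ≤ t) : BLsepEndpoint N t ≤ 1 := by
  rw [sep_eq hN ht]
  linarith [vvf0_nonneg hN ht]

end BLaux

open BLaux in
theorem bernoulli_laplace_profile_continuity
    (N : ℕ → ℕ) (hN_pos : ∀ k, 0 < N k) (hN_mono : StrictMono N)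
    (Φ : ℝ → ℝ)
    (hΦ : ∀ c : ℝ, Tendsto (fun k =>
        BLsepEndpoint (N k)
          (((2 * N k : ℝ)) / 4 * (Real.log (2 * N k) + c))) atTop (nhds (Φ c))) :
    Continuous Φ := by
  classical
  -- the time parametrization
  set τ : ℝ → ℕ → ℝ := fun c k => ((2 * N k : ℝ)) / 4 * (Real.log (2 * N k) + c) with hτ
  have hNkR : ∀ k, (0 : ℝ) < (N k : ℝ) := fun k => by exact_mod_cast hN_pos k
  have hNk : ∀ k : ℕ, (k : ℝ) ≤ (N k : ℝ) := fun k => by exact_mod_cast hN_mono.le_apply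
  have hNtop : Tendsto (fun k => (N k : ℝ)) atTop atTop :=
    tendsto_atTop_mono hNk tendsto_natCast_atTop_atTop
  have hev : ∀ a : ℝ, ∀ᶠ k in atTop, 0 ≤ τ a k := by
    intro a
    have h2 : Tendsto (fun k => 2 * (N k : ℝ)) atTop atTop :=
      hNtop.const_mul_atTop (by norm_num)
    filter_upwards [h2.eventually_ge_atTop (Real.exp (-a))] with k hk
    have hNpos : (0 : ℝ) < 2 * (N k : ℝ) := by linarith [hNkR k]
    have hlog : -a ≤ Real.log (2 * (N k : ℝ)) := (Real.le_log_iff_exp_le hNpos).mpr hk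
    have h3 : 0 ≤ Real.log (2 * (N k : ℝ)) + a := by linarith
    exact mul_nonneg (by positivity) h3
  -- key comparison
  have key : ∀ a b : ℝ, a ≤ b →
      Φ b ≤ Φ a ∧ Real.exp (a - b) * Φ a ≤ Φ b := by
    intro a b hab
    have hevk : ∀ᶠ k in atTop,
        BLsepEndpoint (N k) (τ b k) ≤ BLsepEndpoint (N k) (τ a k)
        ∧ Real.exp (a - b) * BLsepEndpoint (N k) (τ a k) ≤ BLsepEndpoint (N k) (τ b k) := by
      filter_upwards [hev a] with k hk
      have hτab : τ a k ≤ τ b k := by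
        have : (0 : ℝ) ≤ (2 * (N k : ℝ)) / 4 := by positivity
        exact mul_le_mul_of_nonneg_left (by linarith) this
      have hb := sep_bounds (hN_pos k) hk hτab
      refine ⟨hb.1, ?_⟩
      have hexp : (2 / (N k : ℝ)) * (τ a k - τ b k) = a - b := by
        have hNne : (N k : ℝ) ≠ 0 := (hNkR k).ne'
        field_simp [hτ]
        ring
      have := hb.2
      rwa [hexp] at this
    constructor
    · exact le_of_tendsto_of_tendsto (hΦ b) (hΦ a)
        (hevk.mono fun k hk => hk.1)
    · have htb : Tendsto (fun k => Real.exp (a - b) * BLsepEndpoint (N k) (τ a k)) atTop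
          (nhds (Real.exp (a - b) * Φ a)) := (hΦ a).const_mul _
      exact le_of_tendsto_of_tendsto htb (hΦ b) (hevk.mono fun k hk => hk.2)
  -- bounds on Φ
  have hbounds : ∀ a : ℝ, 0 ≤ Φ a ∧ Φ a ≤ 1 := by
    intro a
    constructor
    · refine ge_of_tendsto (hΦ a) ?_
      filter_upwards [hev a] with k hk
      exact sep_nonneg' (hN_pos k) hk
    · refine le_of_tendsto (hΦ a) ?_
      filter_upwards [hev a] with k hk
      exact sep_le_one' (hN_pos k) hk
  -- Lipschitz estimate
  have hlip : ∀ a b : ℝ, a ≤ b → |Φ a - Φ b| ≤ b - a := by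
    intro a b hab
    obtain ⟨h1, h2⟩ := key a b hab
    have h3 : Real.exp (a - b) ≤ 1 := by
      rw [show (1 : ℝ) = Real.exp 0 by rw [Real.exp_zero]]
      exact Real.exp_le_exp.mpr (by linarith)
    have h4 : 1 - Real.exp (a - b) ≤ b - a := by
      have := Real.add_one_le_exp (a - b)
      linarith
    have h5 : Φ a - Φ b ≤ Φ a * (1 - Real.exp (a - b)) := by nlinarith [h2]
    have h6 : Φ a * (1 - Real.exp (a - b)) ≤ 1 * (1 - Real.exp (a - b)) :=
      mul_le_mul_of_nonneg_right (hbounds a).2 (by linarith)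
    rw [abs_of_nonneg (by linarith : (0:ℝ) ≤ Φ a - Φ b)]
    linarith
  have lip : LipschitzWith 1 Φ := by
    apply LipschitzWith.of_dist_le_mul
    intro a b
    rw [NNReal.coe_one, one_mul, Real.dist_eq, Real.dist_eq]
    rcases le_total a b with h | h
    · have := hlip a b h
      rw [abs_of_nonpos (by linarith : a - b ≤ 0)]
      linarith
    · have := hlip b a h
      rw [abs_of_nonneg (by linarith : 0 ≤ a - b), abs_sub_comm] at *
      linarith [hlip b a h]
  exact lip.continuous
end
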